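/- arXiv:2405.15111 — 3 statements merged into one kernel-verified Lean document; each statement's English description precedes it below -/
import Mathlib

section
/- Let f : (2^ℕ)^ℕ → 2^ℕ be a Borel function such that x E₁ y implies f(x) = f(y), where E₁ is the relation of eventual equality of sequences: x E₁ y iff x_n = y_n for all but finitely many n. Then there exists x ∈ (2^ℕ)^ℕ such that f(x) = x_n for infinitely many n. -/
open Set Filter Topology TopologicalSpace

namespace Stmt13Aux

/-- `ℕ → Bool` (Cantor space) but carrying the *discrete* topology. -/
def C : Type := ℕ → Bool

instance : TopologicalSpace C := ⊥
instance : DiscreteTopology C := ⟨rfl⟩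
instance : Nonempty C := ⟨fun _ => true⟩
noncomputable instance : DecidableEq C := Classical.decEq C

/-- The (non-separable) Baire space `(2^ℕ_discrete)^ℕ`. -/
abbrev X : Type := ℕ → C

noncomputable instance : BaireSpace X := by
  letI : MetricSpace X := PiNat.metricSpace
  letI : CompleteSpace X := PiNat.completeSpace
  exact BaireSpace.of_completelyPseudoMetrizable

def ofX (x : X) : ℕ → ℕ → Bool := x

/-- A swap of two points of the discrete space `C`, as a homeomorphism. -/
noncomputable def swapH (a b : C) : C ≃ₜ C :=
  ⟨Equiv.swap a b, continuous_of_discreteTopology, continuous_of_discreteTopology⟩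

/-- Topological 0-1 law: a Baire measurable subset of `X` invariant under eventual
equality is meager or comeager. -/
lemma dichotomy (A : Set X) (hA : BaireMeasurableSet A)
    (hinvA : ∀ x y : X, (∀ᶠ n in atTop, x n = y n) → (x ∈ A ↔ y ∈ A)) :
    A ∈ residual X ∨ Aᶜ ∈ residual X := by
  obtain ⟨u, huo, hAu⟩ := hA.residualEq_isOpen
  obtain ⟨v, hvo, hAv⟩ := hA.compl.residualEq_isOpen
  have hAu' : ∀ᶠ y in residual X, (y ∈ A) = (y ∈ u) := hAu
  have hAv' : ∀ᶠ y in residual X, (y ∈ Aᶜ) = (y ∈ v) := hAv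
  rcases u.eq_empty_or_nonempty with hu | ⟨x₀, hx₀⟩
  · right
    subst hu
    filter_upwards [hAu'] with y hy
    intro hyA
    have : y ∈ (∅ : Set X) := hy ▸ hyA
    exact this
  rcases v.eq_empty_or_nonempty with hv | ⟨y₀, hy₀⟩
  · left
    subst hv
    filter_upwards [hAv'] with y hy
    by_contra hyA
    have : y ∈ (∅ : Set X) := hy ▸ (hyA : y ∈ Aᶜ)
    exact this
  -- both `u` and `v` nonempty: derive a contradiction
  exfalso
  obtain ⟨s, ⟨z, N, rfl⟩, hzs, hsu⟩ :=
    (PiNat.isTopologicalBasis_cylinders (fun _ : ℕ => C)).exists_subset_of_mem_open hx₀ huo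
  obtain ⟨t, ⟨w, M, rfl⟩, hwt, htv⟩ :=
    (PiNat.isTopologicalBasis_cylinders (fun _ : ℕ => C)).exists_subset_of_mem_open hy₀ hvo
  set K := max N M with hK
  have hzu : PiNat.cylinder z K ⊆ u :=
    (PiNat.cylinder_anti z (le_max_left N M)).trans hsu
  have hwv : PiNat.cylinder w K ⊆ v :=
    (PiNat.cylinder_anti w (le_max_right N M)).trans htv
  -- the coordinatewise swap homeomorphism
  set σ : ∀ _ : ℕ, C ≃ₜ C := fun n => if n < K then swapH (z n) (w n) else Homeomorph.refl C
    with hσ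
  set T : X ≃ₜ X := Homeomorph.piCongrRight σ with hT
  have hTapp : ∀ (x : X) (n : ℕ), T x n = σ n (x n) := fun x n => rfl
  have hT1 : ∀ (x : X) (n : ℕ), K ≤ n → T x n = x n := by
    intro x n hn
    rw [hTapp, hσ]
    simp [Nat.not_lt.2 hn]
  have hInv : ∀ x : X, T x ∈ A ↔ x ∈ A := by
    intro x
    exact hinvA (T x) x (eventually_atTop.2 ⟨K, fun n hn => hT1 x n hn⟩)
  have hTzw : ∀ x ∈ PiNat.cylinder z K, T x ∈ PiNat.cylinder w K := by
    intro x hx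
    rw [PiNat.mem_cylinder_iff] at hx ⊢
    intro i hi
    rw [hTapp, hσ, hx i hi]
    simp [hi, swapH]
  have hTwz : ∀ x ∈ PiNat.cylinder w K, T x ∈ PiNat.cylinder z K := by
    intro x hx
    rw [PiNat.mem_cylinder_iff] at hx ⊢
    intro i hi
    rw [hTapp, hσ, hx i hi]
    simp [hi, swapH]
  -- pull the residual set `hAu'` back along `T`
  have hR3 : ∀ᶠ x in residual X, (T x ∈ A) = (T x ∈ u) := by
    have hmap := T.residual_map_eq
    rw [← hmap] at hAu'
    exact Filter.eventually_map.mp hAu'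
  have hR : {x : X | (x ∈ Aᶜ) = (x ∈ v) ∧ (T x ∈ A) = (T x ∈ u)} ∈ residual X := by
    filter_upwards [hAv', hR3] with x h1 h2
    exact ⟨h1, h2⟩
  have hdense := dense_of_mem_residual hR
  obtain ⟨x, hxD, hx1, hx2⟩ :=
    hdense.inter_open_nonempty _ (PiNat.isOpen_cylinder (fun _ : ℕ => C) w K) ⟨w, PiNat.self_mem_cylinder w K⟩
  -- x is in the cylinder at w, hence in v, hence not in A
  have hxAc : x ∈ Aᶜ := hx1 ▸ (hwv hxD)
  -- but T x is in the cylinder at z, hence in u, hence in A, hence x ∈ A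
  have hTxA : T x ∈ A := hx2 ▸ (hzu (hTwz x hxD))
  exact hxAc ((hInv x).mp hTxA)

end Stmt13Aux

open Stmt13Aux in
/-- anti-diagonalization for `E₁`: If `f : (2^ℕ)^ℕ → 2^ℕ` is Borel and invariant
under eventual equality of sequences, then there is `x` with `f(x) = x_n` for infinitely
many `n`. -/
theorem stmt13 (f : (ℕ → (ℕ → Bool)) → (ℕ → Bool)) (hf : Measurable f)
    (hinv : ∀ x y : ℕ → (ℕ → Bool), (∀ᶠ n in atTop, x n = y n) → f x = f y) :
    ∃ x : ℕ → (ℕ → Bool), {n | f x = x n}.Infinite := by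
  classical
  letI : MeasurableSpace X := eventuallyMeasurableSpace (borel X) (residual X)
  -- `ofX : X → (ℕ → ℕ → Bool)` is Baire measurable
  have hid : Measurable ofX := by
    apply measurable_pi_iff.2; intro n
    apply measurable_pi_iff.2; intro k
    intro s _
    have hcont : Continuous (fun x : X => (x n) k) :=
      (continuous_of_discreteTopology (α := C) (f := fun c : C => c k)).comp (continuous_apply n)
    exact (hcont.isOpen_preimage s (isOpen_discrete s)).baireMeasurableSet
  have hF : Measurable (fun x => f (ofX x)) := hf.comp hid
  -- each bit of `f` is, generically on `X`, a constant
  have hbit : ∀ k : ℕ, ∃ c : Bool, {x : X | f (ofX x) k = c} ∈ residual X := by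
    intro k
    set A : Set X := {x : X | f (ofX x) k = true} with hA
    have h1 : Measurable (fun x => f (ofX x) k) :=
      (measurable_pi_apply k).comp hF
    have hmeasA : BaireMeasurableSet A := h1 (measurableSet_singleton true)
    have hinvA : ∀ x y : X, (∀ᶠ n in atTop, x n = y n) → (x ∈ A ↔ y ∈ A) := by
      intro x y hxy
      have : f (ofX x) = f (ofX y) := hinv (ofX x) (ofX y) hxy
      simp only [hA, mem_setOf_eq, this]
    rcases dichotomy A hmeasA hinvA with h | h
    · exact ⟨true, h⟩
    · refine ⟨false, ?_⟩
      have : {x : X | f (ofX x) k = false} = Aᶜ := by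
        ext x
        simp [hA]
      rw [this]
      exact h
  choose b hb using hbit
  -- the set where `f` takes the generic value `b`
  have hG₁ : {x : X | ∀ k, f (ofX x) k = b k} ∈ residual X := by
    have : {x : X | ∀ k, f (ofX x) k = b k} = ⋂ k, {x : X | f (ofX x) k = b k} := by
      ext x; simp
    rw [this]
    exact countable_iInter_mem.2 hb
  -- the set where the value `b` occurs infinitely often as a coordinate
  have hU : ∀ N : ℕ, (⋃ n, ⋃ (_ : N ≤ n), {x : X | x n = b}) ∈ residual X := by
    intro N
    apply residual_of_dense_open
    · apply isOpen_iUnion; intro n; apply isOpen_iUnion; intro _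
      have : {x : X | x n = b} = (fun x : X => x n) ⁻¹' ({b} : Set C) := rfl
      rw [this]
      exact (continuous_apply n).isOpen_preimage _ (isOpen_discrete _)
    · rw [(PiNat.isTopologicalBasis_cylinders (fun _ : ℕ => C)).dense_iff]
      rintro o ⟨z, m, rfl⟩ -
      refine ⟨fun i => if i = max N m then (b : C) else z i, ?_, ?_⟩
      · rw [PiNat.mem_cylinder_iff]
        intro i hi
        have : i ≠ max N m := Nat.ne_of_lt (lt_of_lt_of_le hi (le_max_right N m))
        simp [this]
      · refine mem_iUnion.2 ⟨max N m, mem_iUnion.2 ⟨le_max_left N m, ?_⟩⟩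
        simp
        rfl
  have hG₂ : (⋂ N, ⋃ n, ⋃ (_ : N ≤ n), {x : X | x n = b}) ∈ residual X :=
    countable_iInter_mem.2 hU
  obtain ⟨x₀, hx₁, hx₂⟩ := (dense_of_mem_residual (inter_mem hG₁ hG₂)).nonempty
  refine ⟨ofX x₀, ?_⟩
  have hfx : f (ofX x₀) = b := funext hx₁
  have hS : {n | x₀ n = b}.Infinite := by
    apply Set.infinite_of_forall_exists_gt
    intro a
    have := mem_iInter.1 hx₂ (a + 1)
    obtain ⟨n, hn⟩ := mem_iUnion.1 this
    obtain ⟨hle, hval⟩ := mem_iUnion.1 hn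
    exact ⟨n, hval, Nat.lt_of_lt_of_le (Nat.lt_succ_self a) hle⟩
  apply hS.mono
  intro n hn
  show f (ofX x₀) = ofX x₀ n
  rw [hfx]
  exact (hn : x₀ n = b).symm
end

section
/- Let X = (2^ℕ)^ℕ, Y = 2^ℕ, and let E_ctble be the equivalence relation on X given by x E_ctble y iff {x_n : n ∈ ℕ} = {y_n : n ∈ ℕ}. Define P ⊆ X × Y by P(x, y) iff y ∉ {x_n : n ∈ ℕ}. Then P is E_ctble-invariant with conull sections (for the uniform product measure on 2^ℕ), but there is no Borel function f : X → Y^ℕ such that (x, f(x)_n) ∈ P for all x, n and such that x E_ctble y implies {f(x)_n : n} = {f(y)_n : n}. -/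
namespace S15

structure Frame where
  C : Type
  Pt : Type
  Ext : C → C → Prop
  ext_refl : ∀ u, Ext u u
  ext_trans : ∀ {u v w}, Ext u v → Ext v w → Ext u w
  pre : Pt → ℕ → C
  dir : ∀ x j k, ∃ l, Ext (pre x l) (pre x j) ∧ Ext (pre x l) (pre x k)
  mem_ext : ∀ x j u, Ext (pre x j) u → ∃ l, pre x l = u
  limit : ∀ g : ℕ → C, (∀ k, Ext (g (k+1)) (g k)) → ∃ x : Pt, ∀ k, ∃ j, pre x j = g k

variable (F : Frame)

def Mem (x : F.Pt) (w : F.C) : Prop := ∃ j, F.pre x j = w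

def DenseB (D : Set F.C) (w : F.C) : Prop := ∀ v, F.Ext v w → ∃ u, F.Ext u v ∧ u ∈ D

def Meets (x : F.Pt) (D : Set F.C) : Prop := ∃ j, F.pre x j ∈ D

def Cm (B : Set F.Pt) (w : F.C) : Prop :=
  ∃ D : ℕ → Set F.C, (∀ k, DenseB F (D k) w) ∧
    ∀ x, Mem F x w → (∀ k, Meets F x (D k)) → x ∈ B

variable {F}

theorem mem_of_ext {x : F.Pt} {w w' : F.C} (h : Mem F x w') (he : F.Ext w' w) : Mem F x w := by
  obtain ⟨j, rfl⟩ := h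
  exact F.mem_ext x j w he

theorem mem_pre (x : F.Pt) (j : ℕ) : Mem F x (F.pre x j) := ⟨j, rfl⟩

theorem denseB_anti {D : Set F.C} {w w' : F.C} (h : DenseB F D w) (he : F.Ext w' w) :
    DenseB F D w' := fun v hv => h v (F.ext_trans hv he)

theorem cm_restrict {B : Set F.Pt} {w w' : F.C} (h : Cm F B w) (he : F.Ext w' w) : Cm F B w' := by
  obtain ⟨D, hD, hT⟩ := h
  exact ⟨D, fun k => denseB_anti (hD k) he, fun x hx hm => hT x (mem_of_ext hx he) hm⟩

theorem cm_mono {B B' : Set F.Pt} {w : F.C} (hBB : B ⊆ B') (h : Cm F B w) : Cm F B' w := by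
  obtain ⟨D, hD, hT⟩ := h
  exact ⟨D, hD, fun x hx hm => hBB (hT x hx hm)⟩

theorem cm_univ (w : F.C) : Cm F Set.univ w :=
  ⟨fun _ => Set.univ, fun _ v hv => ⟨v, F.ext_refl v, trivial⟩, fun _ _ _ => trivial⟩

theorem cm_of_subset {B : Set F.Pt} {w : F.C} (h : ∀ x, Mem F x w → x ∈ B) : Cm F B w :=
  ⟨fun _ => Set.univ, fun _ v hv => ⟨v, F.ext_refl v, trivial⟩, fun x hx _ => h x hx⟩

theorem cm_iInter {B : ℕ → Set F.Pt} {w : F.C} (h : ∀ k, Cm F (B k) w) :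
    Cm F (⋂ k, B k) w := by
  choose D hD hT using h
  refine ⟨fun k => D (Nat.unpair k).1 (Nat.unpair k).2, fun k => hD _ _, fun x hx hm => ?_⟩
  refine Set.mem_iInter.2 fun k => hT k x hx fun j => ?_
  simpa [Nat.unpair_pair] using hm (Nat.pair k j)

theorem cm_inter {B B' : Set F.Pt} {w : F.C} (h : Cm F B w) (h' : Cm F B' w) :
    Cm F (B ∩ B') w := by
  have := cm_iInter (B := fun k => if k = 0 then B else B') (w := w)
    (fun k => by by_cases hk : k = 0 <;> simp [hk, h, h'])
  refine cm_mono ?_ this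
  intro x hx
  exact ⟨by simpa using Set.mem_iInter.1 hx 0, by simpa using Set.mem_iInter.1 hx 1⟩

theorem exists_generic {w : F.C} {Ds : ℕ → Set F.C} (hD : ∀ k, DenseB F (Ds k) w) :
    ∃ x, Mem F x w ∧ ∀ k, Meets F x (Ds k) := by
  classical
  -- build a chain
  have step : ∀ k (c : {c : F.C // F.Ext c w}), {c' : {c : F.C // F.Ext c w} // F.Ext c'.1 c.1 ∧ c'.1 ∈ Ds k} := by
    intro k c
    have := hD k c.1 c.2
    exact ⟨⟨this.choose, F.ext_trans this.choose_spec.1 c.2⟩, this.choose_spec.1, this.choose_spec.2⟩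
  let g : ℕ → {c : F.C // F.Ext c w} := fun k => Nat.rec ⟨w, F.ext_refl w⟩ (fun k c => (step k c).1) k
  have hg : ∀ k, F.Ext ((g (k+1)).1) ((g k).1) := fun k => (step k (g k)).2.1
  obtain ⟨x, hx⟩ := F.limit (fun k => (g k).1) hg
  refine ⟨x, ?_, fun k => ?_⟩
  · exact hx 0
  · obtain ⟨j, hj⟩ := hx (k+1)
    exact ⟨j, by rw [hj]; exact (step k (g k)).2.2⟩

theorem cm_nonempty {B : Set F.Pt} {w : F.C} (h : Cm F B w) : ∃ x, Mem F x w ∧ x ∈ B := by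
  obtain ⟨D, hD, hT⟩ := h
  obtain ⟨x, hx, hm⟩ := exists_generic hD
  exact ⟨x, hx, hT x hx hm⟩

theorem cm_not_compl {B : Set F.Pt} {w : F.C} (h : Cm F B w) (h' : Cm F Bᶜ w) : False := by
  obtain ⟨x, _, hx, hx'⟩ : ∃ x, Mem F x w ∧ x ∈ B ∧ x ∈ Bᶜ := by
    obtain ⟨x, hm, hx⟩ := cm_nonempty (cm_inter h h')
    exact ⟨x, hm, hx.1, hx.2⟩
  exact hx' hx

def Compat (u v : F.C) : Prop := ∃ c, F.Ext c u ∧ F.Ext c v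

theorem cm_glue {A : Set F.Pt} {w : F.C}
    (hT : ∀ v, F.Ext v w → ∃ t, F.Ext t v ∧ Cm F A t) : Cm F A w := by
  classical
  set T : Set F.C := {t | Cm F A t} with hTdef
  -- maximal antichain inside T
  obtain ⟨T₀, hT₀max⟩ := zorn_subset {T' : Set F.C | T' ⊆ T ∧ T'.Pairwise fun t t' => ¬Compat t t'}
    (fun c hc hchain => ⟨⋃₀ c, ⟨fun t ht => by
        obtain ⟨a, hac, hta⟩ := ht
        exact (hc hac).1 hta,
      by
        intro t ht t' ht' hne
        obtain ⟨a, hac, hta⟩ := ht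
        obtain ⟨a', hac', hta'⟩ := ht'
        rcases hchain.total hac hac' with hsub | hsub
        · exact (hc hac').2 (hsub hta) hta' hne
        · exact (hc hac).2 hta (hsub hta') hne⟩,
      fun s hs => Set.subset_sUnion_of_mem hs⟩)
  have hT₀T : T₀ ⊆ T := hT₀max.prop.1
  have hT₀anti : T₀.Pairwise fun t t' => ¬Compat t t' := hT₀max.prop.2
  have hcompat_self : ∀ t : F.C, Compat t t := fun t => ⟨t, F.ext_refl t, F.ext_refl t⟩
  let Df : F.C → ℕ → Set F.C := fun t => if h : Cm F A t then h.choose else fun _ => Set.univ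
  have hDf1 : ∀ t, Cm F A t → ∀ k, DenseB F (Df t k) t := fun t h k => by
    simp only [Df, dif_pos h]; exact h.choose_spec.1 k
  have hDf2 : ∀ t, Cm F A t → ∀ x, Mem F x t → (∀ k, Meets F x (Df t k)) → x ∈ A := by
    intro t h x hx hm
    refine h.choose_spec.2 x hx fun k => ?_
    have := hm k
    simpa only [Df, dif_pos h] using this
  refine ⟨fun k => {u | ∃ t ∈ T₀, F.Ext u t ∧ u ∈ Df t k}, fun k => ?_, ?_⟩
  · -- density
    intro v hv
    obtain ⟨t', ht'v, ht'T⟩ := hT v hv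
    have hcomp : ∃ t ∈ T₀, Compat t t' := by
      by_contra hno
      push_neg at hno
      have hmem : insert t' T₀ ∈ {T' : Set F.C | T' ⊆ T ∧ T'.Pairwise fun t t' => ¬Compat t t'} := by
        constructor
        · exact Set.insert_subset ht'T hT₀T
        · refine @Set.pairwise_insert_of_symm _ _ _ _ ⟨?_⟩ |>.2 ⟨hT₀anti, fun t ht _ => ?_⟩
          · intro a b hab hc
            obtain ⟨c, h1, h2⟩ := hc
            exact hab ⟨c, h2, h1⟩
          · intro hc
            obtain ⟨c, h1, h2⟩ := hc
            exact hno t ht ⟨c, h2, h1⟩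
      have : insert t' T₀ ⊆ T₀ := hT₀max.2 hmem (Set.subset_insert _ _)
      exact hno t' (this (Set.mem_insert _ _)) (hcompat_self t')
    obtain ⟨t, htT₀, u₀, hu₀t, hu₀t'⟩ := hcomp
    obtain ⟨u, huu₀, huD⟩ := hDf1 t (hT₀T htT₀) k u₀ hu₀t
    exact ⟨u, F.ext_trans (F.ext_trans huu₀ hu₀t') ht'v, t, htT₀, F.ext_trans huu₀ hu₀t, huD⟩
  · -- truth
    intro x hxw hm
    obtain ⟨j₀, hj₀⟩ := hm 0
    obtain ⟨t₀, ht₀, hext₀, _⟩ := hj₀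
    have hmemt : ∀ (j : ℕ) (t : F.C), t ∈ T₀ → F.Ext (F.pre x j) t → t = t₀ := by
      intro j t ht hext
      by_contra hne
      obtain ⟨a, ha⟩ := F.mem_ext x j t hext
      obtain ⟨b, hb⟩ := F.mem_ext x j₀ t₀ hext₀
      obtain ⟨l, hl1, hl2⟩ := F.dir x a b
      rw [ha] at hl1; rw [hb] at hl2
      exact hT₀anti ht ht₀ hne ⟨F.pre x l, hl1, hl2⟩
    refine hDf2 t₀ (hT₀T ht₀) x (mem_of_ext (mem_pre x j₀) hext₀) fun k => ?_
    obtain ⟨j, hj⟩ := hm k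
    obtain ⟨t, ht, hext, hD⟩ := hj
    rw [hmemt j t ht hext] at hD
    exact ⟨j, hD⟩


variable (F) in
def Pdec (B : Set F.Pt) : Prop :=
  ∀ w, ∃ w', F.Ext w' w ∧ (Cm F B w' ∨ Cm F Bᶜ w')

theorem pdec_empty : Pdec F (∅ : Set F.Pt) := fun w =>
  ⟨w, F.ext_refl w, Or.inr (by rw [Set.compl_empty]; exact cm_univ w)⟩

theorem pdec_compl {B : Set F.Pt} (h : Pdec F B) : Pdec F Bᶜ := by
  intro w
  obtain ⟨w', hw', h'⟩ := h w
  exact ⟨w', hw', by rwa [compl_compl, or_comm]⟩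

theorem pdec_iUnion {B : ℕ → Set F.Pt} (h : ∀ k, Pdec F (B k)) : Pdec F (⋃ k, B k) := by
  intro w
  by_cases hc : ∃ k w', F.Ext w' w ∧ Cm F (B k) w'
  · obtain ⟨k, w', hext, hcm⟩ := hc
    exact ⟨w', hext, Or.inl (cm_mono (Set.subset_iUnion B k) hcm)⟩
  · push_neg at hc
    refine ⟨w, F.ext_refl w, Or.inr ?_⟩
    have hglue : ∀ k, Cm F (B k)ᶜ w := by
      intro k
      refine cm_glue fun v hv => ?_
      obtain ⟨w', hw', h'⟩ := h k v
      refine ⟨w', hw', h'.resolve_left fun hcm => hc k w' (F.ext_trans hw' hv) hcm⟩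
    have := cm_iInter hglue
    rwa [← Set.compl_iUnion] at this

theorem pdec_measurableSet {B : Set F.Pt} [m : MeasurableSpace F.Pt]
    (hle : m ≤ MeasurableSpace.mk (Pdec F) pdec_empty (fun _ => pdec_compl) (fun _ => pdec_iUnion))
    (hB : MeasurableSet B) : Pdec F B := hle B hB


section ListFrame

variable {α : Type} [Inhabited α]

theorem range_map_prefix (x : ℕ → α) {j l : ℕ} (h : j ≤ l) :
    (List.range j).map x <+: (List.range l).map x := by
  have : (List.range l).take j = List.range j := by
    rw [List.take_range]; congr 1; omega
  exact this ▸ (List.take_prefix j (List.range l)).map x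

@[reducible] noncomputable def frameL (α : Type) [Inhabited α] : Frame where
  C := List α
  Pt := ℕ → α
  Ext u v := v <+: u
  ext_refl u := List.prefix_refl u
  ext_trans h1 h2 := h2.trans h1
  pre x j := (List.range j).map x
  dir x j k := ⟨max j k, range_map_prefix x (le_max_left j k), range_map_prefix x (le_max_right j k)⟩
  mem_ext x j u h := by
    refine ⟨u.length, ?_⟩
    have hlen : u.length ≤ j := by
      have := h.length_le
      simpa using this
    have hu : u = ((List.range j).map x).take u.length := List.prefix_iff_eq_take.1 h
    calc ((List.range u.length).map x)
        = ((List.range j).map x).take u.length := by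
          rw [← List.map_take, List.take_range, min_eq_left hlen]
      _ = u := hu.symm
  limit g hg := by
    classical
    have hmono : ∀ {k k'}, k ≤ k' → g k <+: g k' := by
      intro k k' h
      induction h with
      | refl => exact List.prefix_refl _
      | step h ih => exact ih.trans (hg _)
    refine ⟨fun i => if h : ∃ k, i < (g k).length then (g h.choose)[i]'(h.choose_spec) else default,
      fun k => ⟨(g k).length, ?_⟩⟩
    apply List.ext_getElem
    · simp
    · intro i h1 h2
      simp only [List.getElem_map, List.getElem_range]
      have hex : ∃ k', i < (g k').length := ⟨k, by simpa using h2⟩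
      rw [dif_pos hex]
      rcases le_total hex.choose k with hle | hle
      · exact (hmono hle).getElem hex.choose_spec
      · exact ((hmono hle).getElem (by simpa using h2)).symm

theorem frameL_pre (x : ℕ → α) (j : ℕ) : (frameL α).pre x j = (List.range j).map x := rfl

theorem frameL_mem_getElem {x : ℕ → α} {w : List α} (h : Mem (frameL α) x w)
    {i : ℕ} (hi : i < w.length) : x i = w[i] := by
  obtain ⟨j, hj⟩ := h
  have hlen : w.length = j := by rw [← hj]; simp [frameL_pre]
  subst hj
  simp [frameL_pre]

end ListFrame


section PairFrame

@[reducible] noncomputable def frameP (F G : Frame) : Frame where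
  C := F.C × G.C
  Pt := F.Pt × G.Pt
  Ext u v := F.Ext u.1 v.1 ∧ G.Ext u.2 v.2
  ext_refl u := ⟨F.ext_refl u.1, G.ext_refl u.2⟩
  ext_trans h1 h2 := ⟨F.ext_trans h1.1 h2.1, G.ext_trans h1.2 h2.2⟩
  pre x k := (F.pre x.1 (Nat.unpair k).1, G.pre x.2 (Nat.unpair k).2)
  dir x j k := by
    obtain ⟨l1, h11, h12⟩ := F.dir x.1 (Nat.unpair j).1 (Nat.unpair k).1
    obtain ⟨l2, h21, h22⟩ := G.dir x.2 (Nat.unpair j).2 (Nat.unpair k).2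
    exact ⟨Nat.pair l1 l2, by simp [Nat.unpair_pair]; exact ⟨⟨h11, h21⟩, h12, h22⟩⟩
  mem_ext x j u h := by
    obtain ⟨l1, h1⟩ := F.mem_ext x.1 (Nat.unpair j).1 u.1 h.1
    obtain ⟨l2, h2⟩ := G.mem_ext x.2 (Nat.unpair j).2 u.2 h.2
    exact ⟨Nat.pair l1 l2, by simp [Nat.unpair_pair, h1, h2]⟩
  limit g hg := by
    obtain ⟨x1, hx1⟩ := F.limit (fun k => (g k).1) (fun k => (hg k).1)
    obtain ⟨x2, hx2⟩ := G.limit (fun k => (g k).2) (fun k => (hg k).2)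
    refine ⟨(x1, x2), fun k => ?_⟩
    obtain ⟨j1, h1⟩ := hx1 k
    obtain ⟨j2, h2⟩ := hx2 k
    exact ⟨Nat.pair j1 j2, by simp [Nat.unpair_pair, h1, h2]⟩

theorem frameP_mem_fst {F G : Frame} {x : F.Pt × G.Pt} {w : F.C × G.C}
    (h : Mem (frameP F G) x w) : Mem F x.1 w.1 := by
  obtain ⟨j, hj⟩ := h
  exact ⟨(Nat.unpair j).1, congrArg Prod.fst hj⟩

theorem frameP_mem_snd {F G : Frame} {x : F.Pt × G.Pt} {w : F.C × G.C}
    (h : Mem (frameP F G) x w) : Mem G x.2 w.2 := by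
  obtain ⟨j, hj⟩ := h
  exact ⟨(Nat.unpair j).2, congrArg Prod.snd hj⟩

/-- rectangle, easy direction, first coordinate -/
theorem cm2_fst_of_cm1 {F G : Frame} {A : Set F.Pt} {v1 : F.C} (v2 : G.C)
    (h : Cm F A v1) : Cm (frameP F G) (Prod.fst ⁻¹' A) (v1, v2) := by
  obtain ⟨D, hD, hT⟩ := h
  refine ⟨fun k => {c : F.C × G.C | c.1 ∈ D k}, fun k => ?_, ?_⟩
  · rintro ⟨u1, u2⟩ ⟨h1, h2⟩
    obtain ⟨u, hu, huD⟩ := hD k u1 h1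
    exact ⟨(u, u2), ⟨hu, G.ext_refl u2⟩, huD⟩
  · intro z hz hm
    refine hT z.1 (frameP_mem_fst hz) fun k => ?_
    obtain ⟨j, hj⟩ := hm k
    exact ⟨(Nat.unpair j).1, hj⟩

theorem cm2_snd_of_cm1 {F G : Frame} {A : Set G.Pt} (v1 : F.C) {v2 : G.C}
    (h : Cm G A v2) : Cm (frameP F G) (Prod.snd ⁻¹' A) (v1, v2) := by
  obtain ⟨D, hD, hT⟩ := h
  refine ⟨fun k => {c : F.C × G.C | c.2 ∈ D k}, fun k => ?_, ?_⟩
  · rintro ⟨u1, u2⟩ ⟨h1, h2⟩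
    obtain ⟨u, hu, huD⟩ := hD k u2 h2
    exact ⟨(u1, u), ⟨F.ext_refl u1, hu⟩, huD⟩
  · intro z hz hm
    refine hT z.2 (frameP_mem_snd hz) fun k => ?_
    obtain ⟨j, hj⟩ := hm k
    exact ⟨(Nat.unpair j).2, hj⟩

/-- rectangle, hard direction, first coordinate -/
theorem cm1_of_cm2_fst {F G : Frame} {A : Set F.Pt} {v1 : F.C} {v2 : G.C}
    (hP : Pdec F A) (h : Cm (frameP F G) (Prod.fst ⁻¹' A) (v1, v2)) : Cm F A v1 := by
  have key : ∀ u1, F.Ext u1 v1 → ¬ Cm F Aᶜ u1 := by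
    intro u1 hu1 hcm
    have h1 : Cm (frameP F G) (Prod.fst ⁻¹' A)ᶜ (u1, v2) := by
      have := cm2_fst_of_cm1 (G := G) v2 hcm
      rwa [Set.preimage_compl] at this
    have h2 : Cm (frameP F G) (Prod.fst ⁻¹' A) (u1, v2) :=
      cm_restrict h ⟨hu1, G.ext_refl v2⟩
    exact cm_not_compl h2 h1
  refine cm_glue fun v hv => ?_
  obtain ⟨w', hw', hor⟩ := hP v
  refine ⟨w', hw', hor.resolve_right fun hcm => key w' (F.ext_trans hw' hv) hcm⟩

theorem cm1_of_cm2_snd {F G : Frame} {A : Set G.Pt} {v1 : F.C} {v2 : G.C}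
    (hP : Pdec G A) (h : Cm (frameP F G) (Prod.snd ⁻¹' A) (v1, v2)) : Cm G A v2 := by
  have key : ∀ u2, G.Ext u2 v2 → ¬ Cm G Aᶜ u2 := by
    intro u2 hu2 hcm
    have h1 : Cm (frameP F G) (Prod.snd ⁻¹' A)ᶜ (v1, u2) := by
      have := cm2_snd_of_cm1 (F := F) v1 hcm
      rwa [Set.preimage_compl] at this
    have h2 : Cm (frameP F G) (Prod.snd ⁻¹' A) (v1, u2) :=
      cm_restrict h ⟨F.ext_refl v1, hu2⟩
    exact cm_not_compl h2 h1
  refine cm_glue fun v hv => ?_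
  obtain ⟨w', hw', hor⟩ := hP v
  refine ⟨w', hw', hor.resolve_right fun hcm => key w' (G.ext_trans hw' hv) hcm⟩

end PairFrame


section Concrete

abbrev RR : Type := ℕ → Bool
abbrev XX : Type := ℕ → RR

noncomputable abbrev FL : Frame := frameL RR
noncomputable abbrev FPP : Frame := frameP FL FL

theorem bool_set_cases (s : Set Bool) : s = ∅ ∨ s = {true} ∨ s = {false} ∨ s = Set.univ := by
  by_cases ht : true ∈ s <;> by_cases hf : false ∈ s
  · right; right; right; ext b; cases b <;> simp [ht, hf]
  · right; left; ext b; cases b <;> simp [ht, hf]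
  · right; right; left; ext b; cases b <;> simp [ht, hf]
  · left; ext b; cases b <;> simp [ht, hf]

theorem pdec_eval (n k : ℕ) (b : Bool) : Pdec FL {x : XX | x n k = b} := by
  intro w
  set w' := w ++ List.replicate (n + 1 - w.length) (fun _ => false : RR) with hw'
  have hpre : w <+: w' := List.prefix_append _ _
  have hlen : n < w'.length := by
    simp only [hw', List.length_append, List.length_replicate]
    omega
  by_cases hb : w'[n] k = b
  · refine ⟨w', hpre, Or.inl (cm_of_subset fun x hx => ?_)⟩
    have hg := frameL_mem_getElem hx hlen
    simpa only [Set.mem_setOf_eq, hg] using hb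
  · refine ⟨w', hpre, Or.inr (cm_of_subset fun x hx => ?_)⟩
    have hg := frameL_mem_getElem hx hlen
    simpa only [Set.mem_compl_iff, Set.mem_setOf_eq, hg] using hb

theorem pdec_eval_fst (n k : ℕ) (b : Bool) : Pdec FPP {z : XX × XX | z.1 n k = b} := by
  rintro ⟨w1, w2⟩
  obtain ⟨w', hext, hor⟩ := pdec_eval n k b w1
  refine ⟨(w', w2), ⟨hext, FL.ext_refl w2⟩, ?_⟩
  rcases hor with h | h
  · exact Or.inl (cm2_fst_of_cm1 w2 h)
  · refine Or.inr ?_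
    have := cm2_fst_of_cm1 (G := FL) w2 h
    rwa [Set.preimage_compl] at this
  
theorem pdec_eval_snd (n k : ℕ) (b : Bool) : Pdec FPP {z : XX × XX | z.2 n k = b} := by
  rintro ⟨w1, w2⟩
  obtain ⟨w', hext, hor⟩ := pdec_eval n k b w2
  refine ⟨(w1, w'), ⟨FL.ext_refl w1, hext⟩, ?_⟩
  rcases hor with h | h
  · exact Or.inl (cm2_snd_of_cm1 w1 h)
  · refine Or.inr ?_
    have := cm2_snd_of_cm1 (F := FL) w1 h
    rwa [Set.preimage_compl] at this

noncomputable def mL : MeasurableSpace XX :=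
  MeasurableSpace.mk (Pdec FL) pdec_empty (fun _ => pdec_compl) (fun _ => pdec_iUnion)

noncomputable def mP : MeasurableSpace (XX × XX) :=
  MeasurableSpace.mk (Pdec FPP) pdec_empty (fun _ => pdec_compl) (fun _ => pdec_iUnion)

theorem pdec_bool_preimage {Y : Type} {FY : Frame} {mY : MeasurableSpace Y} (hY : FY.Pt = Y)
    (g : Y → Bool) : True := trivial

theorem pdec_of_bool_atoms {F : Frame} (g : F.Pt → Bool)
    (h : ∀ b, Pdec F {x | g x = b}) (s : Set Bool) : Pdec F (g ⁻¹' s) := by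
  rcases bool_set_cases s with rfl | rfl | rfl | rfl
  · rw [Set.preimage_empty]; exact pdec_empty
  · exact h true
  · exact h false
  · rw [Set.preimage_univ]
    have := pdec_compl (pdec_empty (F := F))
    rwa [Set.compl_empty] at this

theorem measurableSet_pdec_L {A : Set XX} (hA : MeasurableSet A) : Pdec FL A := by
  have hle : (inferInstance : MeasurableSpace XX) ≤ mL := by
    refine iSup_le fun n => ?_
    rw [MeasurableSpace.comap_le_iff_le_map]
    refine iSup_le fun k => ?_
    rw [MeasurableSpace.comap_le_iff_le_map]
    intro s _
    show Pdec FL ((fun x : XX => x n k) ⁻¹' s)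
    exact pdec_of_bool_atoms (F := FL) (fun x : XX => x n k) (fun b => pdec_eval n k b) s
  exact hle A hA

theorem measurableSet_pdec_P {A : Set (XX × XX)} (hA : MeasurableSet A) : Pdec FPP A := by
  have hle : (inferInstance : MeasurableSpace (XX × XX)) ≤ mP := by
    refine sup_le ?_ ?_
    · refine (MeasurableSpace.comap_le_iff_le_map).2 ?_
      refine iSup_le fun n => ?_
      rw [MeasurableSpace.comap_le_iff_le_map]
      refine iSup_le fun k => ?_
      rw [MeasurableSpace.comap_le_iff_le_map]
      intro s _
      show Pdec FPP ((fun z : XX × XX => z.1 n k) ⁻¹' s)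
      exact pdec_of_bool_atoms (F := FPP) (fun z : XX × XX => z.1 n k) (fun b => pdec_eval_fst n k b) s
    · refine (MeasurableSpace.comap_le_iff_le_map).2 ?_
      refine iSup_le fun n => ?_
      rw [MeasurableSpace.comap_le_iff_le_map]
      refine iSup_le fun k => ?_
      rw [MeasurableSpace.comap_le_iff_le_map]
      intro s _
      show Pdec FPP ((fun z : XX × XX => z.2 n k) ⁻¹' s)
      exact pdec_of_bool_atoms (F := FPP) (fun z : XX × XX => z.2 n k) (fun b => pdec_eval_snd n k b) s
  exact hle A hA

end Concrete


section Main

theorem countable_lists {s : Set RR} (hs : s.Countable) :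
    {l : List RR | ∀ r ∈ l, r ∈ s}.Countable := by
  haveI := hs.to_subtype
  have hsub : {l : List RR | ∀ r ∈ l, r ∈ s} ⊆
      Set.range (fun l : List s => l.map Subtype.val) := by
    intro l hl
    refine ⟨l.attach.map (fun x => ⟨x.1, hl x.1 x.2⟩), ?_⟩
    simp [List.map_map, Function.comp_def]
  exact (Set.countable_range _).mono hsub

def IndexT : Type := (ℕ × ℕ × Bool) ⊕ (ℕ × ℕ × Bool) ⊕ (ℕ × Bool)

instance : Encodable IndexT := by unfold IndexT; infer_instance

def TaskT : Type := ℕ ⊕ ℕ ⊕ IndexT ⊕ (IndexT × ℕ × ℕ)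

instance : Encodable TaskT := by unfold TaskT; infer_instance

variable (f : XX → XX)

def Eset (m : ℕ) : Set (XX × XX) := {z | f z.1 0 = f z.2 m}

def Bset : IndexT → Set (XX × XX)
  | Sum.inl (m, n, b) => {z | f z.1 m n = b}
  | Sum.inr (Sum.inl (m, n, b)) => {z | f z.2 m n = b}
  | Sum.inr (Sum.inr (m, true)) => Eset f m
  | Sum.inr (Sum.inr (m, false)) => (Eset f m)ᶜ

def icompl : IndexT → IndexT
  | Sum.inl (m, n, b) => Sum.inl (m, n, !b)
  | Sum.inr (Sum.inl (m, n, b)) => Sum.inr (Sum.inl (m, n, !b))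
  | Sum.inr (Sum.inr (m, b)) => Sum.inr (Sum.inr (m, !b))

theorem bset_icompl (i : IndexT) : Bset f (icompl i) = (Bset f i)ᶜ := by
  rcases i with ⟨m, n, b⟩ | ⟨m, n, b⟩ | ⟨m, b⟩
  · ext z; cases b <;> simp [icompl, Bset]
  · ext z; cases b <;> simp [icompl, Bset]
  · cases b
    · simp [icompl, Bset]
    · simp [icompl, Bset]

theorem eset_measurable (hf : Measurable f) (m : ℕ) : MeasurableSet (Eset f m) := by
  have : Eset f m = ⋂ n, ⋃ b : Bool, ({z : XX × XX | f z.1 0 n = b} ∩ {z | f z.2 m n = b}) := by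
    ext z
    simp only [Eset, Set.mem_setOf_eq, Set.mem_iInter, Set.mem_iUnion, Set.mem_inter_iff]
    constructor
    · intro h n
      exact ⟨f z.1 0 n, rfl, by rw [← h]⟩
    · intro h
      funext n
      obtain ⟨b, hb1, hb2⟩ := h n
      rw [hb1, hb2]
  rw [this]
  refine MeasurableSet.iInter fun n => MeasurableSet.iUnion fun b => MeasurableSet.inter ?_ ?_
  · exact (((measurable_pi_apply n).comp ((measurable_pi_apply 0).comp
      (hf.comp measurable_fst)))) (measurableSet_singleton b)
  · exact (((measurable_pi_apply n).comp ((measurable_pi_apply m).comp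
      (hf.comp measurable_snd)))) (measurableSet_singleton b)

theorem bset_pdec (hf : Measurable f) (i : IndexT) : Pdec FPP (Bset f i) := by
  apply measurableSet_pdec_P
  rcases i with ⟨m, n, b⟩ | ⟨m, n, b⟩ | ⟨m, b⟩
  · exact (((measurable_pi_apply n).comp ((measurable_pi_apply m).comp
      (hf.comp measurable_fst)))) (measurableSet_singleton b)
  · exact (((measurable_pi_apply n).comp ((measurable_pi_apply m).comp
      (hf.comp measurable_snd)))) (measurableSet_singleton b)
  · cases b
    · exact (eset_measurable f hf m).compl
    · exact eset_measurable f hf m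

theorem aset_pdec (hf : Measurable f) (m n : ℕ) (b : Bool) :
    Pdec FL {x : XX | f x m n = b} := by
  apply measurableSet_pdec_L
  exact (((measurable_pi_apply n).comp ((measurable_pi_apply m).comp hf)))
    (measurableSet_singleton b)


end Main

theorem no_inv_unif :
    ¬ ∃ f : XX → XX, Measurable f ∧ (∀ x n, f x n ∉ Set.range x) ∧
      ∀ x x', Set.range x = Set.range x' → Set.range (f x) = Set.range (f x') := by
  classical
  rintro ⟨f, hf, hA, hB⟩
  -- decision Skolem functions
  have hdec0 : ∀ (i : IndexT) (p : FPP.C), ∃ w', FPP.Ext w' p ∧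
      (Cm FPP (Bset f i) w' ∨ Cm FPP (Bset f i)ᶜ w') := fun i p => bset_pdec f hf i p
  choose dec hdecE hdecOr using hdec0
  -- witness families for comeagerness
  have hDfam0 : ∀ (i : IndexT) (w : FPP.C), ∃ D : ℕ → Set FPP.C,
      Cm FPP (Bset f i) w →
        (∀ k, DenseB FPP (D k) w) ∧
        (∀ x, Mem FPP x w → (∀ k, Meets FPP x (D k)) → x ∈ Bset f i) := by
    intro i w
    by_cases h : Cm FPP (Bset f i) w
    · exact ⟨h.choose, fun _ => h.choose_spec⟩
    · exact ⟨fun _ => Set.univ, fun hc => absurd hc h⟩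
  choose Dfam hDfam using hDfam0
  -- density Skolem functions
  have hh0 : ∀ (i : IndexT) (w v : FPP.C) (k : ℕ), ∃ u,
      Cm FPP (Bset f i) w ∧ FPP.Ext v w → FPP.Ext u v ∧ u ∈ Dfam i w k := by
    intro i w v k
    by_cases h : Cm FPP (Bset f i) w ∧ FPP.Ext v w
    · obtain ⟨u, hu1, hu2⟩ := (hDfam i w h.1).1 k v h.2
      exact ⟨u, fun _ => ⟨hu1, hu2⟩⟩
    · exact ⟨v, fun hc => absurd hc h⟩
  choose hstep hhstep using hh0
  -- generic value reading function
  let val : FPP.C → RR := fun p n =>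
    decide (∃ q, FPP.Ext q p ∧ Cm FPP (Bset f (Sum.inl (0, n, true))) q)
  -- countable closed set of reals
  let QSof : Set RR → Set FPP.C := fun T => {p | ∀ r ∈ p.1 ++ p.2, r ∈ T}
  let SC : Set RR → Set RR := fun T => T ∪
    ((⋃ p ∈ QSof T, ⋃ i : IndexT, {r | r ∈ (dec i p).1 ++ (dec i p).2}) ∪
     (⋃ w ∈ QSof T, ⋃ v ∈ QSof T, ⋃ i : IndexT, ⋃ k : ℕ,
        {r | r ∈ (hstep i w v k).1 ++ (hstep i w v k).2}) ∪
     (val '' QSof T))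
  let gen : ℕ → Set RR := fun j => Nat.rec {fun _ => false} (fun _ T => SC T) j
  have hgen_succ : ∀ j, gen (j+1) = SC (gen j) := fun j => rfl
  have hQSof_mono : ∀ {T T' : Set RR}, T ⊆ T' → QSof T ⊆ QSof T' := by
    intro T T' hTT p hp r hr
    exact hTT (hp r hr)
  have hSC : ∀ T, T ⊆ SC T := fun T => Set.subset_union_left
  have hgen_mono : ∀ {j j'}, j ≤ j' → gen j ⊆ gen j' := by
    intro j j' h
    induction h with
    | refl => exact subset_rfl
    | step h ih => exact fun _ hr => by exact hSC _ (ih hr)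
  have hQSof_count : ∀ {T : Set RR}, T.Countable → (QSof T).Countable := by
    intro T hT
    have : QSof T ⊆ {l : List RR | ∀ r ∈ l, r ∈ T} ×ˢ {l : List RR | ∀ r ∈ l, r ∈ T} := by
      rintro ⟨l1, l2⟩ hp
      constructor
      · exact fun r hr => hp r (List.mem_append_left _ hr)
      · exact fun r hr => hp r (List.mem_append_right _ hr)
    exact ((countable_lists hT).prod (countable_lists hT)).mono this
  have hgen_count : ∀ j, (gen j).Countable := by
    intro j
    induction j with
    | zero => exact Set.countable_singleton _
    | succ j ih =>
      rw [hgen_succ]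
      refine ih.union (Set.Countable.union (Set.Countable.union ?_ ?_) ?_)
      · refine Set.Countable.biUnion (hQSof_count ih) fun p _ => ?_
        exact Set.countable_iUnion fun i => (List.finite_toSet _).countable
      · refine Set.Countable.biUnion (hQSof_count ih) fun w _ => ?_
        refine Set.Countable.biUnion (hQSof_count ih) fun v _ => ?_
        exact Set.countable_iUnion fun i =>
          Set.countable_iUnion fun k => (List.finite_toSet _).countable
      · exact (hQSof_count ih).image val
  let S : Set RR := ⋃ j, gen j
  have hS_count : S.Countable := Set.countable_iUnion hgen_count
  have hS0 : (fun _ => false : RR) ∈ S := Set.mem_iUnion.2 ⟨0, rfl⟩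
  let QS : Set FPP.C := QSof S
  have hQS_count : QS.Countable := hQSof_count hS_count
  have hQS0 : (([], []) : FPP.C) ∈ QS := by
    intro r hr
    simp at hr
  -- absorption: every condition over S lives in some gen j
  have habsorb : ∀ p : FPP.C, p ∈ QS → ∃ j, p ∈ QSof (gen j) := by
    have hlist : ∀ l : List RR, (∀ r ∈ l, r ∈ S) → ∃ j, ∀ r ∈ l, r ∈ gen j := by
      intro l
      induction l with
      | nil => exact fun _ => ⟨0, by simp⟩
      | cons a l ih =>
        intro h
        obtain ⟨j1, hj1⟩ := Set.mem_iUnion.1 (h a (List.mem_cons_self (a := a) (l := l)))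
        obtain ⟨j2, hj2⟩ := ih fun r hr => h r (List.mem_cons_of_mem a hr)
        refine ⟨max j1 j2, fun r hr => ?_⟩
        rcases List.mem_cons.1 hr with rfl | hr
        · exact hgen_mono (le_max_left j1 j2) hj1
        · exact hgen_mono (le_max_right j1 j2) (hj2 r hr)
    intro p hp
    obtain ⟨j, hj⟩ := hlist (p.1 ++ p.2) hp
    exact ⟨j, hj⟩
  -- closure properties
  have hcDec : ∀ (i : IndexT) (p : FPP.C), p ∈ QS → dec i p ∈ QS := by
    intro i p hp
    obtain ⟨j, hj⟩ := habsorb p hp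
    intro r hr
    refine Set.mem_iUnion.2 ⟨j + 1, ?_⟩
    rw [hgen_succ]
    refine Or.inr (Or.inl (Or.inl ?_))
    exact Set.mem_biUnion hj (Set.mem_iUnion.2 ⟨i, hr⟩)
  have hcH : ∀ (i : IndexT) (w v : FPP.C) (k : ℕ), w ∈ QS → v ∈ QS →
      hstep i w v k ∈ QS := by
    intro i w v k hw hv
    obtain ⟨j1, hj1⟩ := habsorb w hw
    obtain ⟨j2, hj2⟩ := habsorb v hv
    intro r hr
    refine Set.mem_iUnion.2 ⟨max j1 j2 + 1, ?_⟩
    rw [hgen_succ]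
    refine Or.inr (Or.inl (Or.inr ?_))
    refine Set.mem_biUnion (hQSof_mono (hgen_mono (le_max_left j1 j2)) hj1) ?_
    refine Set.mem_biUnion (hQSof_mono (hgen_mono (le_max_right j1 j2)) hj2) ?_
    exact Set.mem_iUnion.2 ⟨i, Set.mem_iUnion.2 ⟨k, hr⟩⟩
  have hcVal : ∀ p : FPP.C, p ∈ QS → val p ∈ S := by
    intro p hp
    obtain ⟨j, hj⟩ := habsorb p hp
    refine Set.mem_iUnion.2 ⟨j + 1, ?_⟩
    rw [hgen_succ]
    exact Or.inr (Or.inr ⟨p, hj, rfl⟩)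
  -- enumerations
  obtain ⟨sE, hsE⟩ : ∃ sE : ℕ → RR, S = Set.range sE :=
    hS_count.exists_eq_range ⟨_, hS0⟩
  obtain ⟨wE, hwE⟩ : ∃ wE : ℕ → FPP.C, QS = Set.range wE :=
    hQS_count.exists_eq_range ⟨_, hQS0⟩
  -- schedule
  let sch : ℕ → Option TaskT := fun s => Encodable.decode (Nat.unpair s).1
  have hocc : ∀ (τ : TaskT) (s₀ : ℕ), ∃ s, s₀ ≤ s ∧ sch s = some τ := by
    intro τ s₀
    refine ⟨Nat.pair (Encodable.encode τ) s₀, Nat.right_le_pair _ _, ?_⟩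
    simp only [sch, Nat.unpair_pair]
    exact Encodable.encodek τ
  -- the generic construction
  let pstep : ℕ → FPP.C → FPP.C := fun s prev =>
    match sch s with
    | some (Sum.inl e) => (prev.1 ++ [sE e], prev.2)
    | some (Sum.inr (Sum.inl e)) => (prev.1, prev.2 ++ [sE e])
    | some (Sum.inr (Sum.inr (Sum.inl i))) => dec i prev
    | some (Sum.inr (Sum.inr (Sum.inr (i, wn, k)))) =>
        if Cm FPP (Bset f i) (wE wn) ∧ FPP.Ext prev (wE wn) then hstep i (wE wn) prev k
        else prev
    | none => prev
  let pc : ℕ → FPP.C := fun s => Nat.rec (([], []) : List RR × List RR) (fun s prev => pstep s prev) s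
  have hpc : ∀ s, pc (s+1) = pstep s (pc s) := fun s => rfl
  have hchain : ∀ s, FPP.Ext (pc (s+1)) (pc s) := by
    intro s
    rw [hpc]
    show FPP.Ext (pstep s (pc s)) (pc s)
    rcases hsch : sch s with _ | τ
    · simp only [pstep, hsch]; exact FPP.ext_refl _
    · rcases τ with e | e | i | ⟨i, wn, k⟩
      · simp only [pstep, hsch]
        exact ⟨List.prefix_append _ _, List.prefix_refl _⟩
      · simp only [pstep, hsch]
        exact ⟨List.prefix_refl _, List.prefix_append _ _⟩
      · simp only [pstep, hsch]
        exact hdecE i (pc s)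
      · simp only [pstep, hsch]
        split
        · next h => exact (hhstep i (wE wn) (pc s) k h).1
        · exact FPP.ext_refl _
  have hchain' : ∀ {s s'}, s ≤ s' → FPP.Ext (pc s') (pc s) := by
    intro s s' h
    induction h with
    | refl => exact FPP.ext_refl _
    | step h ih => exact FPP.ext_trans (hchain _) ih
  have hQ : ∀ s, pc s ∈ QS := by
    intro s
    induction s with
    | zero => exact hQS0
    | succ s ih =>
      rw [hpc]
      show pstep s (pc s) ∈ QS
      rcases hsch : sch s with _ | τ
      · simpa only [pstep, hsch] using ih
      · rcases τ with e | e | i | ⟨i, wn, k⟩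
        · simp only [pstep, hsch]
          intro r hr
          simp only [List.append_assoc, List.mem_append, List.mem_singleton] at hr
          rcases hr with hr | hr | hr
          · exact ih r (List.mem_append_left _ hr)
          · subst hr; rw [hsE]; exact Set.mem_range_self e
          · exact ih r (List.mem_append_right _ hr)
        · simp only [pstep, hsch]
          intro r hr
          simp only [List.mem_append, List.mem_singleton] at hr
          rcases hr with hr | hr | hr
          · exact ih r (List.mem_append_left _ hr)
          · exact ih r (List.mem_append_right _ hr)
          · subst hr; rw [hsE]; exact Set.mem_range_self e
        · simp only [pstep, hsch]
          exact hcDec i (pc s) ih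
        · simp only [pstep, hsch]
          split
          · next h => exact hcH i (wE wn) (pc s) k (by rw [hwE]; exact Set.mem_range_self wn) ih
          · exact ih
  obtain ⟨x, hx⟩ := FPP.limit pc hchain
  -- coordinate entries of x
  have hmem1 : ∀ s, Mem FL x.1 (pc s).1 := fun s => frameP_mem_fst (hx s)
  have hmem2 : ∀ s, Mem FL x.2 (pc s).2 := fun s => frameP_mem_snd (hx s)
  have hentry1 : ∀ (i : ℕ) (s : ℕ) (hi : i < (pc s).1.length), x.1 i = (pc s).1[i] :=
    fun i s hi => frameL_mem_getElem (hmem1 s) hi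
  have hentry2 : ∀ (i : ℕ) (s : ℕ) (hi : i < (pc s).2.length), x.2 i = (pc s).2[i] :=
    fun i s hi => frameL_mem_getElem (hmem2 s) hi
  -- lengths go to infinity
  have hlen1 : ∀ L : ℕ, ∃ s, L ≤ (pc s).1.length := by
    intro L
    induction L with
    | zero => exact ⟨0, Nat.zero_le _⟩
    | succ L ih =>
      obtain ⟨s, hs⟩ := ih
      obtain ⟨s', hss', hsch⟩ := hocc (Sum.inl 0) s
      refine ⟨s' + 1, ?_⟩
      have h1 : (pc s).1.length ≤ (pc s').1.length := ((hchain' hss').1).length_le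
      rw [hpc]
      show L + 1 ≤ ((pstep s' (pc s')).1).length
      simp only [pstep, hsch, List.length_append, List.length_cons, List.length_nil]
      omega
  have hlen2 : ∀ L : ℕ, ∃ s, L ≤ (pc s).2.length := by
    intro L
    induction L with
    | zero => exact ⟨0, Nat.zero_le _⟩
    | succ L ih =>
      obtain ⟨s, hs⟩ := ih
      obtain ⟨s', hss', hsch⟩ := hocc (Sum.inr (Sum.inl 0)) s
      refine ⟨s' + 1, ?_⟩
      have h1 : (pc s).2.length ≤ (pc s').2.length := ((hchain' hss').2).length_le
      rw [hpc]
      show L + 1 ≤ ((pstep s' (pc s')).2).length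
      simp only [pstep, hsch, List.length_append, List.length_cons, List.length_nil]
      omega
  -- range of the two generic enumerations is S
  have hr1 : Set.range x.1 = S := by
    apply Set.eq_of_subset_of_subset
    · rintro r ⟨i, rfl⟩
      obtain ⟨s, hs⟩ := hlen1 (i + 1)
      have hi : i < (pc s).1.length := hs
      rw [hentry1 i s hi]
      exact hQ s _ (List.mem_append_left _ (List.getElem_mem hi))
    · intro r hr
      rw [hsE] at hr
      obtain ⟨e, rfl⟩ := hr
      obtain ⟨s', _, hsch⟩ := hocc (Sum.inl e) 0
      have hl : (pc (s'+1)).1 = (pc s').1 ++ [sE e] := by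
        rw [hpc]; simp only [pstep, hsch]
      have hi : (pc s').1.length < (pc (s'+1)).1.length := by
        rw [hl]; simp
      refine ⟨(pc s').1.length, ?_⟩
      rw [hentry1 _ (s'+1) hi]
      exact (List.getElem_of_eq hl _).trans (List.getElem_concat_length rfl _)
  have hr2 : Set.range x.2 = S := by
    apply Set.eq_of_subset_of_subset
    · rintro r ⟨i, rfl⟩
      obtain ⟨s, hs⟩ := hlen2 (i + 1)
      have hi : i < (pc s).2.length := hs
      rw [hentry2 i s hi]
      exact hQ s _ (List.mem_append_right _ (List.getElem_mem hi))
    · intro r hr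
      rw [hsE] at hr
      obtain ⟨e, rfl⟩ := hr
      obtain ⟨s', _, hsch⟩ := hocc (Sum.inr (Sum.inl e)) 0
      have hl : (pc (s'+1)).2 = (pc s').2 ++ [sE e] := by
        rw [hpc]; simp only [pstep, hsch]
      have hi : (pc s').2.length < (pc (s'+1)).2.length := by
        rw [hl]; simp
      refine ⟨(pc s').2.length, ?_⟩
      rw [hentry2 _ (s'+1) hi]
      exact (List.getElem_of_eq hl _).trans (List.getElem_concat_length rfl _)
  -- truth lemma
  have htruth : ∀ (i : IndexT) (s : ℕ), Cm FPP (Bset f i) (pc s) → x ∈ Bset f i := by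
    intro i s hCm
    refine (hDfam i (pc s) hCm).2 x (hx s) fun k => ?_
    obtain ⟨wn, hwn⟩ : pc s ∈ Set.range wE := by rw [← hwE]; exact hQ s
    obtain ⟨s', hss', hsch⟩ := hocc (Sum.inr (Sum.inr (Sum.inr (i, wn, k)))) s
    have hcond : Cm FPP (Bset f i) (wE wn) ∧ FPP.Ext (pc s') (wE wn) := by
      rw [hwn]; exact ⟨hCm, hchain' hss'⟩
    have hval : pc (s'+1) = hstep i (wE wn) (pc s') k := by
      rw [hpc]; simp only [pstep, hsch, if_pos hcond]
    have hmemD : pc (s'+1) ∈ Dfam i (pc s) k := by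
      rw [hval, ← hwn]
      exact (hhstep i (wE wn) (pc s') k hcond).2
    obtain ⟨j, hj⟩ := hx (s'+1)
    exact ⟨j, by rw [hj]; exact hmemD⟩
  -- every set in the family is positively decided along the generic
  have hdecided : ∀ i : IndexT, x ∈ Bset f i → ∃ s, Cm FPP (Bset f i) (pc s) := by
    intro i hxB
    obtain ⟨s', _, hsch⟩ := hocc (Sum.inr (Sum.inr (Sum.inl i))) 0
    have hval : pc (s'+1) = dec i (pc s') := by
      rw [hpc]; simp only [pstep, hsch]
    rcases hdecOr i (pc s') with h | h
    · exact ⟨s' + 1, by rw [hval]; exact h⟩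
    · exfalso
      have := htruth (icompl i) (s'+1) (by rw [hval, bset_icompl]; exact h)
      rw [bset_icompl] at this
      exact this hxB
  -- the pivotal application of invariance
  have hrng : Set.range (f x.1) = Set.range (f x.2) := hB x.1 x.2 (hr1.trans hr2.symm)
  obtain ⟨m, hm⟩ : ∃ m, f x.2 m = f x.1 0 := by
    have : f x.1 0 ∈ Set.range (f x.2) := by
      rw [← hrng]; exact Set.mem_range_self 0
    exact this
  have hxE : x ∈ Eset f m := hm.symm
  obtain ⟨shat, hE⟩ : ∃ s, Cm FPP (Eset f m) (pc s) :=
    hdecided (Sum.inr (Sum.inr (m, true))) hxE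
  -- uniqueness of generically decided bits below `pc shat`
  have huniq : ∀ (n : ℕ) (i j : Bool) (q q' : FPP.C),
      FPP.Ext q (pc shat) → Cm FPP {z : XX × XX | f z.1 0 n = i} q →
      FPP.Ext q' (pc shat) → Cm FPP {z : XX × XX | f z.2 m n = j} q' → i = j := by
    intro n i j q q' hq hcq hq' hcq'
    have hq1 : Cm FL {y : XX | f y 0 n = i} q.1 :=
      cm1_of_cm2_fst (aset_pdec f hf 0 n i) (G := FL) (v1 := q.1) (v2 := q.2) hcq
    have hq2 : Cm FL {y : XX | f y m n = j} q'.2 :=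
      cm1_of_cm2_snd (aset_pdec f hf m n j) (F := FL) (v1 := q'.1) (v2 := q'.2) hcq'
    have hrext : FPP.Ext (q.1, q'.2) (pc shat) := ⟨hq.1, hq'.2⟩
    have c1 : Cm FPP (Prod.fst ⁻¹' {y : XX | f y 0 n = i}) (q.1, q'.2) :=
      cm2_fst_of_cm1 q'.2 hq1
    have c2 : Cm FPP (Prod.snd ⁻¹' {y : XX | f y m n = j}) (q.1, q'.2) :=
      cm2_snd_of_cm1 q.1 hq2
    have cE : Cm FPP (Eset f m) (q.1, q'.2) := cm_restrict hE hrext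
    obtain ⟨z, _, hz⟩ := cm_nonempty (cm_inter cE (cm_inter c1 c2))
    obtain ⟨hzE, hz1, hz2⟩ := hz
    calc i = f z.1 0 n := hz1.symm
      _ = f z.2 m n := by rw [hzE]
      _ = j := hz2
  -- val computes f x.1 0
  have hval_eq : val (pc shat) = f x.1 0 := by
    funext n
    have hdec2 : ∃ (j : Bool) (q' : FPP.C), FPP.Ext q' (pc shat) ∧
        Cm FPP {z : XX × XX | f z.2 m n = j} q' := by
      obtain ⟨w', hw', hor⟩ := bset_pdec f hf (Sum.inr (Sum.inl (m, n, true))) (pc shat)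
      rcases hor with h | h
      · exact ⟨true, w', hw', h⟩
      · refine ⟨false, w', hw', ?_⟩
        have heq : (Bset f (Sum.inr (Sum.inl (m, n, true))))ᶜ =
            {z : XX × XX | f z.2 m n = false} := by
          ext z
          simp [Bset]
        rwa [heq] at h
    obtain ⟨j, q', hq', hcq'⟩ := hdec2
    have hxb : x ∈ Bset f (Sum.inl (0, n, f x.1 0 n)) := rfl
    obtain ⟨sn, hsn⟩ := hdecided (Sum.inl (0, n, f x.1 0 n)) hxb
    have hell : Cm FPP {z : XX × XX | f z.1 0 n = f x.1 0 n} (pc (max shat sn)) := by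
      refine cm_restrict ?_ (hchain' (le_max_right shat sn))
      exact hsn
    have hellext : FPP.Ext (pc (max shat sn)) (pc shat) := hchain' (le_max_left shat sn)
    cases hyn : f x.1 0 n with
    | true =>
      have hex : ∃ q, FPP.Ext q (pc shat) ∧ Cm FPP (Bset f (Sum.inl (0, n, true))) q := by
        refine ⟨pc (max shat sn), hellext, ?_⟩
        rw [hyn] at hell
        exact hell
      exact decide_eq_true hex
    | false =>
      have hnot : ¬ ∃ q, FPP.Ext q (pc shat) ∧ Cm FPP (Bset f (Sum.inl (0, n, true))) q := by
        rintro ⟨q, hq, hcq⟩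
        have h1 : (true : Bool) = j := huniq n true j q q' hq hcq hq' hcq'
        have h2 : (false : Bool) = j := by
          refine huniq n false j (pc (max shat sn)) q' hellext ?_ hq' hcq'
          rw [hyn] at hell
          exact hell
        rw [← h1] at h2
        exact Bool.false_ne_true h2
      exact decide_eq_false hnot
  -- the contradiction
  have hyS : f x.1 0 ∈ S := by
    rw [← hval_eq]
    exact hcVal (pc shat) (hQ shat)
  have : f x.1 0 ∈ Set.range x.1 := by rw [hr1]; exact hyS
  exact hA x.1 0 this

open MeasureTheory in
theorem stmt15_aux (μ : Measure (ℕ → Bool)) [IsProbabilityMeasure μ]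
    (hμ : ∀ (s : Finset ℕ) (f : ℕ → Bool),
      μ {y | ∀ n ∈ s, y n = f n} = (2 : ENNReal)⁻¹ ^ s.card)
    (x : ℕ → (ℕ → Bool)) : μ {y | y ∉ Set.range x} = 1 := by
  have hsing : ∀ r : ℕ → Bool, μ {r} = 0 := by
    intro r
    have hle : ∀ k : ℕ, μ {r} ≤ (2 : ENNReal)⁻¹ ^ k := by
      intro k
      have hsub : ({r} : Set (ℕ → Bool)) ⊆ {y | ∀ n ∈ Finset.range k, y n = r n} := by
        rintro y hy
        rw [Set.mem_singleton_iff] at hy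
        subst hy
        exact fun n _ => rfl
      calc μ {r} ≤ μ {y | ∀ n ∈ Finset.range k, y n = r n} := measure_mono hsub
        _ = (2 : ENNReal)⁻¹ ^ (Finset.range k).card := hμ _ r
        _ = (2 : ENNReal)⁻¹ ^ k := by rw [Finset.card_range]
    by_contra h
    obtain ⟨k, hk⟩ := ENNReal.exists_inv_two_pow_lt h
    exact absurd (hle k) (not_le.2 hk)
  have hnull : μ {y | y ∈ Set.range x} = 0 := by
    have hrw : {y | y ∈ Set.range x} = ⋃ n, {x n} := by
      ext y
      simp [eq_comm]
    rw [hrw]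
    exact measure_iUnion_null fun n => hsing (x n)
  have hge : (1 : ENNReal) ≤ μ {y | y ∉ Set.range x} := by
    have hcover : (Set.univ : Set (ℕ → Bool)) ⊆
        {y | y ∉ Set.range x} ∪ {y | y ∈ Set.range x} := by
      intro y _
      by_cases h : y ∈ Set.range x
      · exact Or.inr h
      · exact Or.inl h
    calc (1 : ENNReal) = μ Set.univ := measure_univ.symm
      _ ≤ μ ({y | y ∉ Set.range x} ∪ {y | y ∈ Set.range x}) := measure_mono hcover
      _ ≤ μ {y | y ∉ Set.range x} + μ {y | y ∈ Set.range x} := measure_union_le _ _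
      _ = μ {y | y ∉ Set.range x} := by rw [hnull, add_zero]
  exact le_antisymm prob_le_one hge

end S15

open Set MeasureTheory

/-- Let `E_ctble` on `X = (2^ℕ)^ℕ` be `x E y ⟺ range x = range y` and
`P(x,y) ⟺ y ∉ range x`. Then `P` is `E_ctble`-invariant with `μ`-conull sections (for the
uniform product measure `μ` on `2^ℕ`), but `P` has no Borel `E_ctble`-invariant countable
uniformization. -/
theorem stmt15 (μ : Measure (ℕ → Bool)) [IsProbabilityMeasure μ]
    (hμ : ∀ (s : Finset ℕ) (f : ℕ → Bool),
      μ {y | ∀ n ∈ s, y n = f n} = (2 : ENNReal)⁻¹ ^ s.card) :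
    (∀ x x' : ℕ → (ℕ → Bool), Set.range x = Set.range x' →
      ∀ y : ℕ → Bool, (y ∉ Set.range x ↔ y ∉ Set.range x')) ∧
    (∀ x : ℕ → (ℕ → Bool), μ {y | y ∉ Set.range x} = 1) ∧
    ¬ ∃ f : (ℕ → (ℕ → Bool)) → ℕ → (ℕ → Bool), Measurable f ∧
        (∀ x n, f x n ∉ Set.range x) ∧
        ∀ x x', Set.range x = Set.range x' → Set.range (f x) = Set.range (f x') := by
  refine ⟨fun x x' h y => by rw [h], fun x => S15.stmt15_aux μ hμ x, S15.no_inv_unif⟩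
end

section
/- Let E be a Borel equivalence relation on a Polish space X which is Borel reducible to a Borel equivalence relation F on a Polish space Y all of whose classes are Kσ, but which is not Borel reducible to any countable Borel equivalence relation. Then the set P ⊆ X × Y defined by P(x, y) iff g(x) F y (where g is the reduction) is E-invariant with Kσ sections but admits no Borel E-invariant countable uniformization. -/
open Set MeasureTheory

section Stmt16Aux
open ENNReal

/-- A set admitting an injection from Cantor space is not countable. -/
lemma stmt16_not_countable_of_cantor_inj {β : Type*} {s : Set β} (f : (ℕ → Bool) → β)
    (hinj : Function.Injective f) (hmem : ∀ σ, f σ ∈ s) : ¬ s.Countable := by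
  intro hc
  haveI := hc.to_subtype
  have hg : Function.Injective (fun σ : ℕ → Bool => (⟨f σ, hmem σ⟩ : s)) := by
    intro a b hab
    apply hinj
    simpa using congrArg Subtype.val hab
  haveI : Countable (ℕ → Bool) := Function.Injective.countable hg
  obtain ⟨F, hF⟩ := exists_surjective_nat (ℕ → Bool)
  obtain ⟨m, hm⟩ := hF (fun n => !(F n n))
  have := congrFun hm m
  simp at this

lemma stmt16_condensation_core {Γ : Type*} [TopologicalSpace Γ] [SecondCountableTopology Γ]
    {S : Set Γ} (hS : ¬ S.Countable) :
    ∃ T : Set Γ, T ⊆ S ∧ ¬ T.Countable ∧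
      ∀ p ∈ T, ∀ U : Set Γ, p ∈ U → IsOpen U → ¬ (T ∩ U).Countable := by
  classical
  set T : Set Γ := {p ∈ S | ∀ U : Set Γ, p ∈ U → IsOpen U → ¬ (S ∩ U).Countable} with hT
  have hcover : (S \ T).Countable := by
    set 𝒞 : Set (Set Γ) := {V ∈ TopologicalSpace.countableBasis Γ | (S ∩ V).Countable} with h𝒞
    have h𝒞c : 𝒞.Countable := (TopologicalSpace.countable_countableBasis Γ).mono (fun V hV => hV.1)
    have hsub : S \ T ⊆ ⋃ V ∈ 𝒞, (S ∩ V) := by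
      intro p hp
      obtain ⟨hpS, hpT⟩ := hp
      rw [hT] at hpT
      simp only [mem_setOf_eq, not_and, not_forall] at hpT
      obtain ⟨U, hpU, hUopen, hUc⟩ := hpT hpS
      rw [not_not] at hUc
      obtain ⟨V, hVb, hpV, hVU⟩ := (TopologicalSpace.isBasis_countableBasis Γ).exists_subset_of_mem_open hpU hUopen
      have : V ∈ 𝒞 := ⟨hVb, hUc.mono (inter_subset_inter_right _ hVU)⟩
      exact mem_biUnion this ⟨hpS, hpV⟩
    exact (Set.Countable.biUnion h𝒞c (fun V hV => hV.2)).mono hsub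
  have hTunc : ¬ T.Countable := by
    intro hTc
    exact hS (by simpa using (hTc.union hcover).mono (by intro p hp; by_cases h : p ∈ T <;> [exact Or.inl h; exact Or.inr ⟨hp, h⟩]))
  refine ⟨T, fun p hp => hp.1, hTunc, ?_⟩
  intro p hp U hpU hUopen hc
  have hSU : ¬ (S ∩ U).Countable := hp.2 U hpU hUopen
  apply hSU
  have : S ∩ U ⊆ (T ∩ U) ∪ (S \ T) := by
    intro q hq
    by_cases h : q ∈ T
    · exact Or.inl ⟨h, hq.2⟩
    · exact Or.inr ⟨hq.1, h⟩
  exact (hc.union hcover).mono this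


section Core
variable {Γ A : Type} [MetricSpace Γ] [CompleteSpace Γ] [SecondCountableTopology Γ]
  [MeasurableSpace Γ] [BorelSpace Γ]
  [TopologicalSpace A] [PolishSpace A] [MeasurableSpace A] [BorelSpace A]

/-- Core lemma: for continuous `q` from a complete separable metric space to a Polish space,
the set of points with uncountable fiber is analytic. -/
lemma stmt16_aux_core (q : Γ → A) (hq : Continuous q) :
    ∃ N : Set A, AnalyticSet N ∧ ∀ y : A, ¬ (q ⁻¹' {y}).Countable ↔ y ∈ N := by
  classical
  set P := (List Bool → Γ × ℝ≥0∞) with hP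
  have mcoord : ∀ t : List Bool, Measurable (fun z : A × P => z.2 t) :=
    fun t => (measurable_pi_apply t).comp measurable_snd
  have mV : ∀ t : List Bool, Measurable (fun z : A × P => (z.2 t).1) :=
    fun t => (mcoord t).fst
  have mR : ∀ t : List Bool, Measurable (fun z : A × P => (z.2 t).2) :=
    fun t => (mcoord t).snd
  have medist : ∀ s t : List Bool, Measurable (fun z : A × P => edist (z.2 s).1 (z.2 t).1) :=
    fun s t => continuous_edist.measurable.comp ((mV s).prodMk (mV t))
  set NSet : Set (A × P) :=
    (⋂ (t : List Bool), ⋂ (b : Bool), {z : A × P | edist (z.2 (b::t)).1 (z.2 t).1 ≤ (z.2 t).2}) ∩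
    (⋂ (t : List Bool), ⋂ (b : Bool), {z : A × P | (z.2 (b::t)).2 ≤ (z.2 t).2 / 4}) ∩
    (⋂ (t : List Bool), {z : A × P |
        3 * ((z.2 (false::t)).2 + (z.2 (true::t)).2) ≤ edist (z.2 (false::t)).1 (z.2 (true::t)).1}) ∩
    (⋂ (t : List Bool), {z : A × P | 0 < (z.2 t).2}) ∩
    {z : A × P | (z.2 []).2 ≤ 1} ∩
    (⋂ (t : List Bool), {z : A × P | q (z.2 t).1 = z.1}) with hNSet
  have hNSetMeas : MeasurableSet NSet := by
    refine ((((MeasurableSet.inter ?_ ?_).inter ?_).inter ?_).inter ?_).inter ?_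
    · exact MeasurableSet.iInter fun t => MeasurableSet.iInter fun b =>
        measurableSet_le (medist _ _) (mR t)
    · exact MeasurableSet.iInter fun t => MeasurableSet.iInter fun b =>
        measurableSet_le (mR _) ((mR t).div_const 4)
    · exact MeasurableSet.iInter fun t =>
        measurableSet_le (((mR _).add (mR _)).const_mul 3) (medist _ _)
    · exact MeasurableSet.iInter fun t => measurableSet_lt measurable_const (mR t)
    · exact measurableSet_le (mR _) measurable_const
    · exact MeasurableSet.iInter fun t =>
        ((hq.measurable.comp (mV t)).stronglyMeasurable).measurableSet_eq_fun
          measurable_fst.stronglyMeasurable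
  refine ⟨Prod.fst '' NSet, hNSetMeas.analyticSet_image measurable_fst, fun y => ⟨?_, ?_⟩⟩
  · -- uncountable fiber → y ∈ N
    intro hy
    obtain ⟨T, hTS, hTunc, hTcond⟩ := stmt16_condensation_core hy
    have hTne : T.Nonempty := by
      rcases T.eq_empty_or_nonempty with h | h
      · exact absurd (by simp [h]) hTunc
      · exact h
    have hdiv4 : ∀ a : ℝ≥0∞, a / 4 ≤ a := fun a => by
      rw [div_eq_mul_inv]
      calc a * 4⁻¹ ≤ a * 1 := mul_le_mul_right (ENNReal.inv_le_one.2 (by norm_num)) a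
      _ = a := mul_one a
    set D := {d : Γ × ℝ≥0∞ // d.1 ∈ T ∧ 0 < d.2 ∧ d.2 ≤ 1} with hD
    have hstep : ∀ d : D, ∃ c : (Γ × ℝ≥0∞) × (Γ × ℝ≥0∞),
        (c.1.1 ∈ T ∧ 0 < c.1.2 ∧ c.1.2 ≤ 1) ∧ (c.2.1 ∈ T ∧ 0 < c.2.2 ∧ c.2.2 ≤ 1) ∧
        edist c.1.1 d.1.1 ≤ d.1.2 ∧ edist c.2.1 d.1.1 ≤ d.1.2 ∧
        c.1.2 ≤ d.1.2 / 4 ∧ c.2.2 ≤ d.1.2 / 4 ∧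
        3 * (c.1.2 + c.2.2) ≤ edist c.1.1 c.2.1 := by
      rintro ⟨⟨p, ρ⟩, hpT, hρ0, hρ1⟩
      have hU : ¬ (T ∩ EMetric.ball p ρ).Countable :=
        hTcond p hpT _ (EMetric.mem_ball_self hρ0) EMetric.isOpen_ball
      have h2 : ∃ p₀ ∈ T ∩ EMetric.ball p ρ, ∃ p₁ ∈ T ∩ EMetric.ball p ρ, p₀ ≠ p₁ := by
        by_contra hcon
        push_neg at hcon
        exact hU (Set.Subsingleton.countable (fun a ha b hb => hcon a ha b hb))
      obtain ⟨p₀, hp₀, p₁, hp₁, hne⟩ := h2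
      set η := edist p₀ p₁ with hη
      have hη0 : 0 < η := edist_pos.2 hne
      have hmin0 : 0 < min (ρ / 4) (η / 8) := by
        refine lt_min ?_ ?_ <;>
        · rw [pos_iff_ne_zero, Ne, ENNReal.div_eq_zero_iff]
          push_neg
          exact ⟨by positivity, by norm_num⟩
      have hmin1 : min (ρ / 4) (η / 8) ≤ 1 :=
        le_trans (min_le_left _ _) (le_trans (hdiv4 ρ) hρ1)
      have harith : 3 * (min (ρ/4) (η/8) + min (ρ/4) (η/8)) ≤ η := by
        calc 3 * (min (ρ/4) (η/8) + min (ρ/4) (η/8)) ≤ 3 * (η/8 + η/8) := by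
              gcongr <;> exact min_le_right _ _
        _ = 6 * (η / 8) := by ring
        _ ≤ 8 * (η / 8) := mul_le_mul_left (by norm_num) _
        _ ≤ η := ENNReal.mul_div_le
      refine ⟨((p₀, min (ρ/4) (η/8)), (p₁, min (ρ/4) (η/8))),
        ⟨hp₀.1, hmin0, hmin1⟩, ⟨hp₁.1, hmin0, hmin1⟩,
        le_of_lt (EMetric.mem_ball.1 hp₀.2), le_of_lt (EMetric.mem_ball.1 hp₁.2),
        min_le_left _ _, min_le_left _ _, harith⟩
    choose ch hch using hstep
    let child : Bool → D → D := fun b d =>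
      Bool.rec (motive := fun _ => D) ⟨(ch d).1, (hch d).1⟩ ⟨(ch d).2, (hch d).2.1⟩ b
    let root : D := ⟨(hTne.choose, 1), hTne.choose_spec, zero_lt_one, le_refl 1⟩
    let node : List Bool → D := fun t =>
      List.rec (motive := fun _ => D) root (fun b _ ih => child b ih) t
    have hnode : ∀ (b : Bool) (t : List Bool), node (b :: t) = child b (node t) := fun b t => rfl
    let u : P := fun t => ((node t : D) : Γ × ℝ≥0∞)
    have hufalse : ∀ t : List Bool, u (false :: t) = (ch (node t)).1 := fun t => rfl
    have hutrue : ∀ t : List Bool, u (true :: t) = (ch (node t)).2 := fun t => rfl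
    have humem : ((y, u) : A × P) ∈ NSet := by
      rw [hNSet]
      simp only [Set.mem_inter_iff, Set.mem_iInter, Set.mem_setOf_eq]
      refine ⟨⟨⟨⟨⟨fun t b => ?_, fun t b => ?_⟩, fun t => ?_⟩, fun t => ?_⟩, ?_⟩, fun t => ?_⟩
      · show edist (u (b :: t)).1 (u t).1 ≤ (u t).2
        cases b
        · rw [hufalse t]
          exact (hch (node t)).2.2.1
        · rw [hutrue t]
          exact (hch (node t)).2.2.2.1
      · show (u (b :: t)).2 ≤ (u t).2 / 4
        cases b
        · rw [hufalse t]
          exact (hch (node t)).2.2.2.2.1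
        · rw [hutrue t]
          exact (hch (node t)).2.2.2.2.2.1
      · show 3 * ((u (false :: t)).2 + (u (true :: t)).2) ≤ edist (u (false :: t)).1 (u (true :: t)).1
        rw [hufalse t, hutrue t]
        exact (hch (node t)).2.2.2.2.2.2
      · exact (node t).2.2.1
      · show (u []).2 ≤ 1
        exact (node []).2.2.2
      · show q (u t).1 = y
        have := hTS (node t).2.1
        simpa using this
    exact ⟨((y, u) : A × P), humem, rfl⟩
  · -- y ∈ N → uncountable fiber
    rintro ⟨z, hzmem, hz1⟩
    rw [hNSet] at hzmem
    simp only [Set.mem_inter_iff, Set.mem_iInter, Set.mem_setOf_eq] at hzmem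
    obtain ⟨⟨⟨⟨⟨h1, h2⟩, h3⟩, h4⟩, h5⟩, h6⟩ := hzmem
    set u : P := z.2 with hu
    -- branch lists
    let L : (ℕ → Bool) → ℕ → List Bool := fun σ =>
      fun n => Nat.rec [] (fun m ih => σ m :: ih) n
    have hLs : ∀ σ n, L σ (n + 1) = σ n :: L σ n := fun σ n => rfl
    have hRgeom : ∀ (σ : ℕ → Bool) (n : ℕ), (u (L σ n)).2 ≤ (4 : ℝ≥0∞)⁻¹ ^ n := by
      intro σ n
      induction n with
      | zero => rw [pow_zero]; exact h5
      | succ n ih =>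
        calc (u (L σ (n+1))).2 ≤ (u (L σ n)).2 / 4 := h2 (L σ n) (σ n)
        _ ≤ ((4 : ℝ≥0∞)⁻¹ ^ n) / 4 := ENNReal.div_le_div_right ih 4
        _ = (4 : ℝ≥0∞)⁻¹ ^ (n + 1) := by rw [div_eq_mul_inv, pow_succ]
    have hRone : ∀ σ n, (u (L σ n)).2 ≤ 1 := by
      intro σ n
      refine le_trans (hRgeom σ n) ?_
      calc (4 : ℝ≥0∞)⁻¹ ^ n ≤ 1 ^ n := pow_le_pow_left' (ENNReal.inv_le_one.2 (by norm_num)) n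
      _ = 1 := one_pow n
    have hRrel : ∀ (σ : ℕ → Bool) (n m : ℕ),
        (u (L σ (m + n))).2 ≤ (u (L σ n)).2 * (4 : ℝ≥0∞)⁻¹ ^ m := by
      intro σ n m
      induction m with
      | zero => simpa using le_rfl
      | succ m ih =>
        have : m + 1 + n = (m + n) + 1 := by omega
        rw [this, hLs]
        calc (u (σ (m+n) :: L σ (m+n))).2 ≤ (u (L σ (m+n))).2 / 4 := h2 _ _
        _ ≤ ((u (L σ n)).2 * (4 : ℝ≥0∞)⁻¹ ^ m) / 4 := ENNReal.div_le_div_right ih 4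
        _ = (u (L σ n)).2 * (4 : ℝ≥0∞)⁻¹ ^ (m + 1) := by
            rw [div_eq_mul_inv, pow_succ, mul_assoc]
    have hjump : ∀ (σ : ℕ → Bool) (n : ℕ),
        edist ((u (L σ n)).1) ((u (L σ (n+1))).1) ≤ (u (L σ n)).2 := by
      intro σ n
      rw [hLs, edist_comm]
      exact h1 (L σ n) (σ n)
    have hlim : ∀ σ : ℕ → Bool, ∃ p : Γ,
        Filter.Tendsto (fun n => (u (L σ n)).1) Filter.atTop (nhds p) := by
      intro σ
      apply cauchySeq_tendsto_of_complete
      apply cauchySeq_of_edist_le_geometric (4 : ℝ≥0∞)⁻¹ 1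
        (ENNReal.inv_lt_one.2 (by norm_num)) one_ne_top
      intro n
      rw [one_mul]
      exact le_trans (hjump σ n) (hRgeom σ n)
    choose pt hpt using hlim
    have hfiber : ∀ σ : ℕ → Bool, pt σ ∈ q ⁻¹' {y} := by
      intro σ
      have hc : Filter.Tendsto (fun n => q ((u (L σ n)).1)) Filter.atTop (nhds (q (pt σ))) :=
        (hq.tendsto (pt σ)).comp (hpt σ)
      have hc' : Filter.Tendsto (fun _ : ℕ => y) Filter.atTop (nhds (q (pt σ))) := by
        convert hc using 2 with n
        rw [h6 (L _ _), hz1]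
      have := tendsto_nhds_unique hc' tendsto_const_nhds
      simpa [Set.mem_preimage] using this
    -- local limit bound
    have hloc : ∀ (σ : ℕ → Bool) (n : ℕ),
        edist ((u (L σ n)).1) (pt σ) ≤ (u (L σ n)).2 / (1 - (4 : ℝ≥0∞)⁻¹) := by
      intro σ n
      have hshift : Filter.Tendsto (fun m => (u (L σ (m + n))).1) Filter.atTop (nhds (pt σ)) := by
        exact (hpt σ).comp (Filter.tendsto_add_atTop_nat n)
      have hjump' : ∀ m, edist ((u (L σ (m + n))).1) ((u (L σ (m + 1 + n))).1) ≤
          (u (L σ n)).2 * (4 : ℝ≥0∞)⁻¹ ^ m := by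
        intro m
        have : m + 1 + n = (m + n) + 1 := by omega
        rw [this]
        exact le_trans (hjump σ (m + n)) (hRrel σ n m)
      have := edist_le_of_edist_le_geometric_of_tendsto₀ ((4 : ℝ≥0∞)⁻¹) ((u (L σ n)).2)
        (f := fun m => (u (L σ (m + n))).1) (fun m => hjump' m) hshift
      simpa using this
    -- denominator bound : 1 - 4⁻¹ ≥ 2⁻¹
    have hden : (2 : ℝ≥0∞)⁻¹ ≤ 1 - (4 : ℝ≥0∞)⁻¹ := by
      have h24 : (4 : ℝ≥0∞)⁻¹ ≤ 2⁻¹ := by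
        rw [ENNReal.inv_le_inv]
        norm_num
      calc (2 : ℝ≥0∞)⁻¹ = 1 - 2⁻¹ := by
            rw [← ENNReal.inv_two_add_inv_two]
            simp [ENNReal.add_sub_cancel_left]
      _ ≤ 1 - 4⁻¹ := tsub_le_tsub_left h24 1
    have hloc2 : ∀ (σ : ℕ → Bool) (n : ℕ),
        edist ((u (L σ n)).1) (pt σ) ≤ (u (L σ n)).2 * 2 := by
      intro σ n
      refine le_trans (hloc σ n) ?_
      calc (u (L σ n)).2 / (1 - (4 : ℝ≥0∞)⁻¹) ≤ (u (L σ n)).2 / 2⁻¹ :=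
            ENNReal.div_le_div_left hden _
      _ = (u (L σ n)).2 * 2 := by rw [div_eq_mul_inv, inv_inv]
    -- injectivity
    have hinj : Function.Injective pt := by
      intro σ σ' hpp
      by_contra hne
      have hex : ∃ n, σ n ≠ σ' n := Function.ne_iff.1 hne
      set n₀ := Nat.find hex with hn₀def
      have hdiff : σ n₀ ≠ σ' n₀ := Nat.find_spec hex
      have hagree : ∀ m, m < n₀ → σ m = σ' m := fun m hm => not_not.1 (Nat.find_min hex hm)
      have hLeq : L σ n₀ = L σ' n₀ := by
        have key : ∀ n, (∀ m, m < n → σ m = σ' m) → L σ n = L σ' n := by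
          intro n
          induction n with
          | zero => intro _; rfl
          | succ n ih =>
            intro h
            rw [hLs, hLs, h n (Nat.lt_succ_self n), ih (fun m hm => h m (Nat.lt_succ_of_lt hm))]
        exact key n₀ hagree
      have hbσ : edist ((u (σ n₀ :: L σ n₀)).1) (pt σ) ≤ (u (σ n₀ :: L σ n₀)).2 * 2 := by
        have := hloc2 σ (n₀ + 1)
        rwa [hLs] at this
      have hbσ' : edist ((u (σ' n₀ :: L σ n₀)).1) (pt σ') ≤ (u (σ' n₀ :: L σ n₀)).2 * 2 := by
        have := hloc2 σ' (n₀ + 1)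
        rw [hLs, ← hLeq] at this
        exact this
      have htri : edist ((u (σ n₀ :: L σ n₀)).1) ((u (σ' n₀ :: L σ n₀)).1) ≤
          (u (σ n₀ :: L σ n₀)).2 * 2 + (u (σ' n₀ :: L σ n₀)).2 * 2 := by
        calc edist ((u (σ n₀ :: L σ n₀)).1) ((u (σ' n₀ :: L σ n₀)).1)
            ≤ edist ((u (σ n₀ :: L σ n₀)).1) (pt σ) + edist (pt σ) ((u (σ' n₀ :: L σ n₀)).1) :=
              edist_triangle _ _ _
        _ ≤ (u (σ n₀ :: L σ n₀)).2 * 2 + (u (σ' n₀ :: L σ n₀)).2 * 2 :=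
              add_le_add hbσ (by rw [hpp, edist_comm]; exact hbσ')
      have hsep : 3 * ((u (σ n₀ :: L σ n₀)).2 + (u (σ' n₀ :: L σ n₀)).2) ≤
          edist ((u (σ n₀ :: L σ n₀)).1) ((u (σ' n₀ :: L σ n₀)).1) := by
        have hσ'val : σ' n₀ = !(σ n₀) := by
          cases hσ : σ n₀ <;> cases hσ'' : σ' n₀ <;> simp_all
        rw [hσ'val]
        cases hσ : σ n₀
        · simpa using h3 (L σ n₀)
        · rw [edist_comm, add_comm]
          simpa using h3 (L σ n₀)
      have e1 : (u (σ n₀ :: L σ n₀)).2 ≤ 1 := by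
        have := hRone σ (n₀ + 1); rwa [hLs] at this
      have e2 : (u (σ' n₀ :: L σ n₀)).2 ≤ 1 := by
        have := hRone σ' (n₀ + 1); rw [hLs, ← hLeq] at this; exact this
      have hfin : (u (σ n₀ :: L σ n₀)).2 + (u (σ' n₀ :: L σ n₀)).2 ≠ ⊤ :=
        ne_top_of_le_ne_top (by norm_num) (add_le_add e1 e2)
      have hpos : (u (σ n₀ :: L σ n₀)).2 + (u (σ' n₀ :: L σ n₀)).2 ≠ 0 :=
        (lt_of_lt_of_le (h4 _) le_self_add).ne'
      have hcontra : (3 : ℝ≥0∞) * ((u (σ n₀ :: L σ n₀)).2 + (u (σ' n₀ :: L σ n₀)).2) ≤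
          2 * ((u (σ n₀ :: L σ n₀)).2 + (u (σ' n₀ :: L σ n₀)).2) := by
        refine le_trans hsep (le_trans htri ?_)
        rw [mul_comm ((u (σ n₀ :: L σ n₀)).2) (2 : ℝ≥0∞),
          mul_comm ((u (σ' n₀ :: L σ n₀)).2) (2 : ℝ≥0∞), ← mul_add]
      have hfinal := (ENNReal.mul_le_mul_iff_left hpos hfin).1 hcontra
      norm_num at hfinal
    exact stmt16_not_countable_of_cantor_inj pt hinj hfiber

end Core

lemma stmt16_sections {α β : Type} [TopologicalSpace α] [PolishSpace α]
    [MeasurableSpace α] [BorelSpace α]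
    [TopologicalSpace β] [PolishSpace β] [MeasurableSpace β] [BorelSpace β]
    (W : Set (α × β)) (hW : MeasurableSet W) :
    ∃ N : Set α, AnalyticSet N ∧ ∀ y : α, ¬ {b : β | (y, b) ∈ W}.Countable ↔ y ∈ N := by
  classical
  obtain ⟨τ', hle, hpol, hclosed, -⟩ := hW.isClopenable
  have hbe : (inferInstance : MeasurableSpace (α × β)) = @borel (α × β) τ' := by
    have h1 : (inferInstance : MeasurableSpace (α × β))
        = @borel (α × β) instTopologicalSpaceProd :=
      @BorelSpace.measurable_eq (α × β) instTopologicalSpaceProd _ inferInstance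
    have h2 : @borel (α × β) τ' = @borel (α × β) instTopologicalSpaceProd :=
      @borel_eq_borel_of_le (α × β) τ' instTopologicalSpaceProd hpol inferInstance hle
    exact h1.trans h2.symm
  letI tΓ : TopologicalSpace (↥W) := @instTopologicalSpaceSubtype (α × β) (· ∈ W) τ'
  haveI pΓ : @PolishSpace (↥W) tΓ := @IsClosed.polishSpace (α × β) τ' hpol W hclosed
  letI uΓ := @TopologicalSpace.upgradeIsCompletelyMetrizable (↥W) tΓ pΓ.toIsCompletelyMetrizableSpace
  letI mΓ : MeasurableSpace (↥W) := Subtype.instMeasurableSpace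
  haveI bΓ : @BorelSpace (↥W) tΓ mΓ := by
    constructor
    show MeasurableSpace.comap Subtype.val (inferInstance : MeasurableSpace (α × β))
        = @borel (↥W) tΓ
    rw [hbe]
    exact (@borel_comap (↥W) (α × β) Subtype.val τ').symm
  let q : ↥W → α := fun p => (p.val).1
  have hq : @Continuous (↥W) α tΓ _ q := by
    have hval : @Continuous (↥W) (α × β) tΓ τ' Subtype.val := @continuous_subtype_val (α × β) τ' _
    have hid : @Continuous (α × β) (α × β) τ' instTopologicalSpaceProd id :=
      @continuous_id_of_le (α × β) τ' instTopologicalSpaceProd hle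
    have hfst : @Continuous (α × β) α instTopologicalSpaceProd _ Prod.fst := continuous_fst
    have hfst' : @Continuous (α × β) α τ' _ Prod.fst :=
      continuous_le_dom (t₁ := instTopologicalSpaceProd) (t₂ := τ') hle hfst
    exact @Continuous.comp (↥W) (α × β) α tΓ τ' _ _ _ hfst' hval
  obtain ⟨N, hNanal, hNiff⟩ :=
    @stmt16_aux_core (↥W) α uΓ.toMetricSpace uΓ.toCompleteSpace pΓ.toSecondCountableTopology
      mΓ bΓ _ _ _ _ q hq
  refine ⟨N, hNanal, fun y => ?_⟩
  rw [← hNiff y]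
  have himg : (fun p : ↥W => (p.val).2) '' (q ⁻¹' {y}) = {b : β | (y, b) ∈ W} := by
    ext b
    constructor
    · rintro ⟨p, hp, rfl⟩
      have h1 : (p.val).1 = y := hp
      have hmem : p.val ∈ W := p.property
      rwa [Set.mem_setOf_eq, ← h1, Prod.mk.eta]
    · intro hb
      exact ⟨⟨(y, b), hb⟩, rfl, rfl⟩
  have hinjOn : Set.InjOn (fun p : ↥W => (p.val).2) (q ⁻¹' {y}) := by
    rintro p hp p' hp' hpp
    have h1 : (p.val).1 = y := hp
    have h1' : (p'.val).1 = y := hp'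
    apply Subtype.ext
    exact Prod.ext (h1.trans h1'.symm) hpp
  constructor
  · intro hsec hfib
    rw [← himg] at hsec
    exact hsec (hfib.image _)
  · intro hfib hsec
    exact hfib (Set.countable_of_injective_of_countable_image hinjOn (by rwa [himg]))


end Stmt16Aux

/-- Let `E` be a Borel equivalence relation on a Polish space `X`, Borel reducible
(via `g`) to a Borel equivalence relation `F` on a Polish space `Y` all of whose classes are
`Kσ`, but not Borel reducible to any countable Borel equivalence relation on a Polish space.
Then `P(x,y) ⟺ F (g x) y` is `E`-invariant with `Kσ` sections but admits no Borel
`E`-invariant countable uniformization. -/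
theorem stmt16 {X Y : Type}
    [TopologicalSpace X] [PolishSpace X] [MeasurableSpace X] [BorelSpace X]
    [TopologicalSpace Y] [PolishSpace Y] [MeasurableSpace Y] [BorelSpace Y]
    (E : X → X → Prop) (hE : Equivalence E)
    (hEborel : MeasurableSet {p : X × X | E p.1 p.2})
    (F : Y → Y → Prop) (hF : Equivalence F)
    (hFborel : MeasurableSet {p : Y × Y | F p.1 p.2})
    (hFKsigma : ∀ y : Y, ∃ K : ℕ → Set Y, (∀ n, IsCompact (K n)) ∧ {y' | F y y'} = ⋃ n, K n)
    (g : X → Y) (hg : Measurable g) (hred : ∀ x x', E x x' ↔ F (g x) (g x'))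
    (hnotctble : ¬ ∃ (Z : Type) (tZ : TopologicalSpace Z) (mZ : MeasurableSpace Z),
      @PolishSpace Z tZ ∧ @BorelSpace Z tZ mZ ∧
      ∃ F' : Z → Z → Prop, Equivalence F' ∧
        MeasurableSet[mZ.prod mZ] {p : Z × Z | F' p.1 p.2} ∧
        (∀ z, {z' | F' z z'}.Countable) ∧
        ∃ S : X → Z, @Measurable X Z _ mZ S ∧ ∀ x x', E x x' ↔ F' (S x) (S x')) :
    (∀ x x', E x x' → ∀ y, (F (g x) y ↔ F (g x') y)) ∧
    (∀ x, ∃ K : ℕ → Set Y, (∀ n, IsCompact (K n)) ∧ {y | F (g x) y} = ⋃ n, K n) ∧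
    ¬ ∃ f : X → ℕ → Y, Measurable f ∧ (∀ x n, F (g x) (f x n)) ∧
        ∀ x x', E x x' → Set.range (f x) = Set.range (f x') := by

  classical
  refine ⟨?_, fun x => hFKsigma (g x), ?_⟩
  · intro x x' hxx' y
    have hgg : F (g x) (g x') := (hred x x').1 hxx'
    exact ⟨fun h => hF.trans (hF.symm hgg) h, fun h => hF.trans hgg h⟩
  rintro ⟨f, hfmeas, hfP, hfinv⟩
  apply hnotctble
  by_cases hXe : IsEmpty X
  · haveI : Subsingleton X := hXe.instSubsingleton
    refine ⟨ℕ, inferInstance, inferInstance, inferInstance, inferInstance,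
      Eq, eq_equivalence, ?_, ?_, fun x => hXe.elim x, Subsingleton.measurable, ?_⟩
    · exact (Set.to_countable _).measurableSet
    · intro z
      exact (Set.countable_singleton z).mono (fun z' hz' => by simpa using hz'.symm)
    · intro x
      exact hXe.elim x
  haveI hXne : Nonempty X := not_isEmpty_iff.1 hXe
  have hfn : ∀ n, Measurable (fun x => f x n) := fun n => (measurable_pi_apply n).comp hfmeas
  have hfmap : Measurable (fun p : X × ℕ => f p.1 p.2) :=
    measurable_from_prod_countable_left (f := fun p : X × ℕ => f p.1 p.2) (fun n => hfn n)
  -- the analytic set A = union of ranges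
  set A : Set Y := Set.range (fun p : X × ℕ => f p.1 p.2) with hA
  have hAanal : AnalyticSet A := by
    rw [hA, ← Set.image_univ]
    exact MeasurableSet.univ.analyticSet_image hfmap
  have hmemA : ∀ x n, f x n ∈ A := fun x n => ⟨(x, n), rfl⟩
  -- key class facts
  have hsameclass : ∀ x x' y, F (g x) y → F (g x') y → E x x' := by
    intro x x' y h1 h2
    exact (hred x x').2 (hF.trans h1 (hF.symm h2))
  have htrigger : ∀ y ∈ A, ∀ x, F (g x) y → ∃ n, f x n = y := by
    rintro y ⟨⟨x₀, n₀⟩, rfl⟩ x hx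
    have hE' : E x x₀ := hsameclass x x₀ _ hx (hfP x₀ n₀)
    have := hfinv x x₀ hE'
    have : f x₀ n₀ ∈ Set.range (f x) := this ▸ ⟨n₀, rfl⟩
    exact this
  -- the analytic "bad" set
  set V : Set (X × Y) := {p | F (g p.1) p.2 ∧ ∀ n, f p.1 n ≠ p.2} with hV
  have hVmeas : MeasurableSet V := by
    have h1 : MeasurableSet {p : X × Y | F (g p.1) p.2} :=
      hFborel.preimage ((hg.comp measurable_fst).prodMk measurable_snd)
    have h2 : MeasurableSet {p : X × Y | ∀ n, f p.1 n ≠ p.2} := by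
      rw [Set.setOf_forall]
      refine MeasurableSet.iInter fun n => ?_
      have h3 : MeasurableSet {p : X × Y | f p.1 n = p.2} :=
        ((hfn n).comp measurable_fst).stronglyMeasurable.measurableSet_eq_fun
          measurable_snd.stronglyMeasurable
      exact h3.compl
    exact h1.inter h2
  set Qc : Set Y := Prod.snd '' V with hQc
  have hQcanal : AnalyticSet Qc := hVmeas.analyticSet_image measurable_snd
  have hdisj1 : Disjoint A Qc := by
    rw [Set.disjoint_left]
    rintro y hyA ⟨⟨x, y'⟩, ⟨hxF, hxne⟩, rfl⟩
    obtain ⟨n, hn⟩ := htrigger _ hyA x hxF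
    exact hxne n hn
  obtain ⟨B1, hAB1, hB1dis, hB1meas⟩ := hAanal.measurablySeparable hQcanal hdisj1
  -- W and the analytic set of uncountable sections
  set W : Set (Y × Y) := {p | F p.1 p.2 ∧ p.2 ∈ B1} with hW
  have hWmeas : MeasurableSet W :=
    hFborel.inter (hB1meas.preimage measurable_snd)
  obtain ⟨N, hNanal, hNiff⟩ := stmt16_sections W hWmeas
  have hAcount : ∀ y ∈ A, {b : Y | (y, b) ∈ W}.Countable := by
    rintro y ⟨⟨x₀, n₀⟩, rfl⟩
    have hsub : {b : Y | (f x₀ n₀, b) ∈ W} ⊆ Set.range (f x₀) := by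
      rintro b ⟨hFb, hbB1⟩
      have hgb : F (g x₀) b := hF.trans (hfP x₀ n₀) hFb
      have hbQc : b ∉ Qc := Set.disjoint_right.1 hB1dis hbB1
      by_contra hbr
      exact hbQc ⟨(x₀, b), ⟨hgb, fun n hn => hbr ⟨n, hn⟩⟩, rfl⟩
    exact (Set.countable_range _).mono hsub
  have hdisj2 : Disjoint A N := by
    rw [Set.disjoint_left]
    intro y hyA hyN
    exact ((hNiff y).2 hyN) (hAcount y hyA)
  obtain ⟨B2, hAB2, hB2dis, hB2meas⟩ := hAanal.measurablySeparable hNanal hdisj2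
  set Bs : Set Y := B1 ∩ B2 with hBs
  have hABs : A ⊆ Bs := Set.subset_inter hAB1 hAB2
  have hBsmeas : MeasurableSet Bs := hB1meas.inter hB2meas
  have hBscount : ∀ y : Y, {y' | F y y' ∧ y' ∈ Bs}.Countable := by
    intro y
    by_cases hw : ∃ w, F y w ∧ w ∈ Bs
    · obtain ⟨w, hFw, hwBs⟩ := hw
      have hwN : w ∉ N := Set.disjoint_right.1 hB2dis hwBs.2
      have hwc : {b : Y | (w, b) ∈ W}.Countable := by
        by_contra hc
        exact hwN ((hNiff w).1 hc)
      refine hwc.mono ?_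
      rintro y' ⟨hFyy', hy'Bs⟩
      exact ⟨hF.trans (hF.symm hFw) hFyy', hy'Bs.1⟩
    · have : {y' | F y y' ∧ y' ∈ Bs} = ∅ := by
        ext y'
        simp only [Set.mem_setOf_eq, Set.mem_empty_iff_false, iff_false]
        exact fun h => hw ⟨y', h.1, h.2⟩
      rw [this]
      exact Set.countable_empty
  -- the countable Borel equivalence relation
  refine ⟨Y, inferInstance, inferInstance, inferInstance, inferInstance,
    fun y y' => y = y' ∨ (F y y' ∧ y ∈ Bs ∧ y' ∈ Bs), ?_, ?_, ?_,
    fun x => f x 0, hfn 0, ?_⟩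
  · refine ⟨fun y => Or.inl rfl, fun {y y'} h => ?_, fun {a b c} h1 h2 => ?_⟩
    · rcases h with rfl | ⟨h1, h2, h3⟩
      · exact Or.inl rfl
      · exact Or.inr ⟨hF.symm h1, h3, h2⟩
    · rcases h1 with rfl | ⟨ha1, ha2, ha3⟩
      · exact h2
      · rcases h2 with rfl | ⟨hb1, hb2, hb3⟩
        · exact Or.inr ⟨ha1, ha2, ha3⟩
        · exact Or.inr ⟨hF.trans ha1 hb1, ha2, hb3⟩
  · have hdiag : MeasurableSet {p : Y × Y | p.1 = p.2} :=
      measurable_fst.stronglyMeasurable.measurableSet_eq_fun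
        measurable_snd.stronglyMeasurable
    have hrest : MeasurableSet {p : Y × Y | F p.1 p.2 ∧ p.1 ∈ Bs ∧ p.2 ∈ Bs} :=
      hFborel.inter ((hBsmeas.preimage measurable_fst).inter (hBsmeas.preimage measurable_snd))
    exact hdiag.union hrest
  · intro z
    have hsub : {z' | z = z' ∨ (F z z' ∧ z ∈ Bs ∧ z' ∈ Bs)} ⊆
        {z} ∪ {y' | F z y' ∧ y' ∈ Bs} := by
      rintro z' (rfl | ⟨h1, h2, h3⟩)
      · exact Or.inl rfl
      · exact Or.inr ⟨h1, h3⟩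
    exact ((Set.countable_singleton z).union (hBscount z)).mono hsub
  · intro x x'
    constructor
    · intro hxx'
      refine Or.inr ⟨?_, hABs (hmemA x 0), hABs (hmemA x' 0)⟩
      exact hF.trans (hF.symm (hfP x 0)) (hF.trans ((hred x x').1 hxx') (hfP x' 0))
    · rintro (heq | ⟨h1, _, _⟩)
      · have heq' : f x 0 = f x' 0 := heq
        apply hsameclass x x' (f x 0) (hfP x 0)
        rw [heq']
        exact hfP x' 0
      · have h1' : F (f x 0) (f x' 0) := h1
        exact hsameclass x x' (f x' 0) (hF.trans (hfP x 0) h1') (hfP x' 0)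
end
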